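/- arXiv:1312.7498 — 11 statements merged into one kernel-verified Lean document; each statement's English description precedes it below -/
import Mathlib

section
/- Let c ∈ (0,1) and let {w_n}_{n≥1} be a sequence in the open unit disk 𝔻 such that (1 - |w_n|)/(1 - |w_{n-1}|) ≤ c for all n ≥ 2. Then for every index k, the infinite product ∏_{j : j ≠ k} d(w_k, w_j) is at least (∏_{j=1}^∞ (1 - c^j)/(1 + c^j))². -/
open Complex Filter Metric

/-- The pseudohyperbolic distance `d(z,w) = |z - w| / |1 - conj z * w|` on the unit disk. -/
noncomputable def pd (z w : ℂ) : ℝ :=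
  ‖z - w‖ / ‖1 - (starRingEnd ℂ) z * w‖

lemma pd_nonneg (z w : ℂ) : 0 ≤ pd z w :=
  div_nonneg (norm_nonneg _) (norm_nonneg _)

lemma pd_comm (z w : ℂ) : pd z w = pd w z := by
  unfold pd
  rw [norm_sub_rev, ← Complex.norm_conj (1 - (starRingEnd ℂ) w * z)]
  congr 2
  simp [map_sub, map_mul, Complex.conj_conj, mul_comm]

/-- Algebraic core: if `1 - y ≤ t * (1 - x)` then `(1-t)/(1+t) ≤ (y-x)/(1-y*x)`. -/
lemma lemA {x y t : ℝ} (hx : 0 ≤ x) (hx1 : x < 1) (hy1 : y < 1) (ht0 : 0 < t)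
    (ht1 : t < 1) (hxy : 1 - y ≤ t * (1 - x)) :
    (1 - t) / (1 + t) ≤ (y - x) / (1 - y * x) := by
  have hyx : x < y := by nlinarith
  have hd1 : 0 < 1 + t := by linarith
  have hd2 : 0 < 1 - y * x := by nlinarith
  rw [div_le_div_iff₀ hd1 hd2]
  nlinarith [mul_nonneg (mul_nonneg (by linarith : (0:ℝ) ≤ 1 - x)
    (by linarith : (0:ℝ) ≤ 1 - y)) (by linarith : (0:ℝ) ≤ 1 - t)]

/-- The pseudohyperbolic distance dominates the radial one. -/
lemma lemB (z w : ℂ) (hz : ‖z‖ < 1) (hw : ‖w‖ < 1) :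
    (‖z‖ - ‖w‖) / (1 - ‖z‖ * ‖w‖) ≤ pd z w := by
  have hr0 : 0 ≤ ‖z‖ := norm_nonneg _
  have hs0 : 0 ≤ ‖w‖ := norm_nonneg _
  set r := ‖z‖ with hr
  set s := ‖w‖ with hs
  have hrs : r * s < 1 := by nlinarith
  by_cases hle : r ≤ s
  · have h1 : (r - s) / (1 - r * s) ≤ 0 :=
      div_nonpos_of_nonpos_of_nonneg (by linarith) (by linarith)
    exact h1.trans (pd_nonneg z w)
  push_neg at hle
  have hnum : 0 ≤ (r - s) / (1 - r * s) :=
    div_nonneg (by linarith) (by linarith)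
  -- compare squares
  have hv : ((starRingEnd ℂ) z * w).re ≤ r * s := by
    calc ((starRingEnd ℂ) z * w).re ≤ ‖(starRingEnd ℂ) z * w‖ :=
          Complex.re_le_norm _
      _ = r * s := by rw [norm_mul, Complex.norm_conj]
  have hden : ‖1 - (starRingEnd ℂ) z * w‖ ≠ 0 := by
    intro h0
    have h1 : (1 : ℂ) - (starRingEnd ℂ) z * w = 0 := by
      simpa using norm_eq_zero.mp h0
    have h2 : (1 : ℂ) = (starRingEnd ℂ) z * w := by
      linear_combination h1
    have h3 := congrArg (‖·‖) h2
    simp only [norm_one, norm_mul, Complex.norm_conj] at h3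
    rw [← hr, ← hs] at h3
    linarith
  have hsq : ((r - s) / (1 - r * s)) ^ 2 ≤ pd z w ^ 2 := by
    have e1 : pd z w ^ 2 =
        Complex.normSq (z - w) / Complex.normSq (1 - (starRingEnd ℂ) z * w) := by
      rw [pd, div_pow, Complex.sq_norm, Complex.sq_norm]
    rw [e1]
    have e2 : Complex.normSq (z - w) = r ^ 2 + s ^ 2 - 2 * ((starRingEnd ℂ) z * w).re := by
      rw [Complex.normSq_sub]
      have : (z * (starRingEnd ℂ) w).re = ((starRingEnd ℂ) z * w).re := by
        have := Complex.conj_re ((starRingEnd ℂ) z * w)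
        rw [← this]
        congr 1
        simp [map_mul, Complex.conj_conj, mul_comm]
      rw [this, ← Complex.sq_norm, ← Complex.sq_norm w]
    have e3 : Complex.normSq (1 - (starRingEnd ℂ) z * w) =
        1 + (r * s) ^ 2 - 2 * ((starRingEnd ℂ) z * w).re := by
      have hu : Complex.normSq ((starRingEnd ℂ) z * w) = (r * s) ^ 2 := by
        rw [← Complex.sq_norm, norm_mul, Complex.norm_conj]
      rw [Complex.normSq_sub, hu, Complex.normSq_one, one_mul, Complex.conj_re]
    rw [e2, e3, div_pow]
    set v := ((starRingEnd ℂ) z * w).re with hvdef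
    have hd2 : (0:ℝ) < 1 + (r * s) ^ 2 - 2 * v := by nlinarith
    have hd1 : (0:ℝ) < (1 - r * s) ^ 2 := pow_pos (by linarith) 2
    rw [div_le_div_iff₀ hd1 hd2]
    nlinarith [mul_nonneg (mul_nonneg (by nlinarith : (0:ℝ) ≤ r * s - v)
      (by nlinarith : (0:ℝ) ≤ 1 - r ^ 2)) (by nlinarith : (0:ℝ) ≤ 1 - s ^ 2)]
  exact (pow_le_pow_iff_left₀ hnum (pd_nonneg z w) two_ne_zero).mp hsq

/-- If `{w_n}` is a sequence in the open unit disk with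
`(1 - |w_n|)/(1 - |w_{n-1}|) ≤ c < 1`, then for every `k`,
`∏_{j ≠ k} d(w_k, w_j) ≥ (∏_{j=1}^∞ (1 - c^j)/(1 + c^j))²`. -/
theorem stmt0 (c : ℝ) (hc : c ∈ Set.Ioo (0 : ℝ) 1) (w : ℕ → ℂ)
    (hw : ∀ n, w n ∈ ball (0 : ℂ) 1)
    (hratio : ∀ n, (1 - ‖w (n + 1)‖) / (1 - ‖w n‖) ≤ c) :
    ∀ k : ℕ, (∏' j : {j : ℕ // j ≠ k}, pd (w k) (w (j : ℕ))) ≥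
      (∏' j : ℕ, (1 - c ^ (j + 1)) / (1 + c ^ (j + 1))) ^ 2 := by
  obtain ⟨hc0, hc1⟩ := hc
  have habs : ∀ n, ‖w n‖ < 1 := by
    intro n
    have := hw n
    rwa [mem_ball_zero_iff] at this
  have hpos : ∀ n, 0 < 1 - ‖w n‖ := fun n => by linarith [habs n]
  -- growth estimate
  have hgrow : ∀ n m, 1 - ‖w (n + m)‖ ≤ c ^ m * (1 - ‖w n‖) := by
    intro n m
    induction m with
    | zero => simp
    | succ m ih =>
      have h1 : 1 - ‖w (n + m + 1)‖ ≤ c * (1 - ‖w (n + m)‖) :=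
        (div_le_iff₀ (hpos (n + m))).mp (hratio (n + m))
      have : n + (m + 1) = n + m + 1 := by omega
      rw [this]
      calc 1 - ‖w (n + m + 1)‖ ≤ c * (1 - ‖w (n + m)‖) := h1
        _ ≤ c * (c ^ m * (1 - ‖w n‖)) := by
            exact mul_le_mul_of_nonneg_left ih hc0.le
        _ = c ^ (m + 1) * (1 - ‖w n‖) := by ring
  set h : ℕ → ℝ := fun j => (1 - c ^ (j + 1)) / (1 + c ^ (j + 1)) with hh
  have hcpow : ∀ m : ℕ, 1 ≤ m → 0 < c ^ m ∧ c ^ m < 1 := fun m hm =>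
    ⟨pow_pos hc0 m, pow_lt_one₀ hc0.le hc1 (by omega)⟩
  have hhpos : ∀ j, 0 < h j := by
    intro j
    obtain ⟨h1, h2⟩ := hcpow (j + 1) (by omega)
    exact div_pos (by linarith) (by linarith)
  have hhle1 : ∀ j, h j ≤ 1 := by
    intro j
    obtain ⟨h1, h2⟩ := hcpow (j + 1) (by omega)
    rw [div_le_one (by linarith)]
    linarith
  -- multipliability of h
  have hmul : Multipliable h := by
    apply Real.multipliable_of_summable_log hhpos
    have hsum : Summable (fun j : ℕ => -Real.log (h j)) := by
      apply Summable.of_nonneg_of_le (fun j => ?_) (fun j => ?_)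
        (((summable_geometric_of_lt_one hc0.le hc1).mul_left (2 / (1 - c))).mul_left c)
      · rw [neg_nonneg]
        exact Real.log_nonpos (hhpos j).le (hhle1 j)
      · obtain ⟨h1, h2⟩ := hcpow (j + 1) (by omega)
        rw [← Real.log_inv]
        have hinv : (h j)⁻¹ = (1 + c ^ (j + 1)) / (1 - c ^ (j + 1)) := by
          rw [hh]
          rw [inv_div]
        rw [hinv]
        have hlog : Real.log ((1 + c ^ (j + 1)) / (1 - c ^ (j + 1))) ≤
            (1 + c ^ (j + 1)) / (1 - c ^ (j + 1)) - 1 :=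
          Real.log_le_sub_one_of_pos (div_pos (by linarith) (by linarith))
        have he : (1 + c ^ (j + 1)) / (1 - c ^ (j + 1)) - 1 =
            2 * c ^ (j + 1) / (1 - c ^ (j + 1)) := by
          rw [div_sub_one (by linarith : (1:ℝ) - c ^ (j + 1) ≠ 0)]
          congr 1
          ring
        have hb : 2 * c ^ (j + 1) / (1 - c ^ (j + 1)) ≤ c * (2 / (1 - c) * c ^ j) := by
          rw [div_le_iff₀ (by linarith)]
          have hc1j : c ^ (j + 1) ≤ c := by
            calc c ^ (j + 1) = c * c ^ j := by ring
              _ ≤ c * 1 := by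
                  exact mul_le_mul_of_nonneg_left (pow_le_one₀ hc0.le hc1.le) hc0.le
              _ = c := by ring
          have : c * (2 / (1 - c) * c ^ j) = 2 * c ^ (j + 1) / (1 - c) := by
            field_simp
            ring
          rw [this, div_mul_eq_mul_div, le_div_iff₀ (by linarith)]
          have hp : 0 ≤ c ^ (j + 1) := h1.le
          nlinarith
        linarith
    exact Summable.congr hsum.neg (fun j => by simp)
  set P : ℝ := ∏' j : ℕ, h j with hP
  -- P is a lower bound for all finite partial products of h
  have hPle : ∀ T : Finset ℕ, P ≤ ∏ n ∈ T, h n := by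
    intro T
    refine le_of_tendsto hmul.hasProd ?_
    filter_upwards [Filter.eventually_ge_atTop T] with U hU
    rw [← Finset.prod_sdiff hU]
    have h1 : ∏ n ∈ U \ T, h n ≤ 1 :=
      Finset.prod_le_one (fun n _ => (hhpos n).le) (fun n _ => hhle1 n)
    have h2 : 0 ≤ ∏ n ∈ T, h n := Finset.prod_nonneg (fun n _ => (hhpos n).le)
    nlinarith [Finset.prod_nonneg (fun n (_ : n ∈ U \ T) => (hhpos n).le)]
  have hP0 : 0 ≤ P :=
    ge_of_tendsto' hmul.hasProd (fun U => Finset.prod_nonneg (fun n _ => (hhpos n).le))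
  have hP1 : P ≤ 1 := by simpa using hPle ∅
  intro k
  -- pointwise lower bound
  set G : ℕ → ℝ := fun n => if n < k then h (k - n - 1) else h (n - k - 1) with hG
  have hGpos : ∀ n, 0 < G n := by
    intro n
    rw [hG]
    dsimp only
    split <;> exact hhpos _
  have hbound : ∀ n, n ≠ k → G n ≤ pd (w k) (w n) := by
    intro n hn
    by_cases hnk : n < k
    · set m := k - n with hm
      have hm1 : 1 ≤ m := by omega
      have hkeq : k = n + m := by omega
      obtain ⟨hcm0, hcm1⟩ := hcpow m hm1
      have hgr : 1 - ‖w k‖ ≤ c ^ m * (1 - ‖w n‖) := by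
        rw [hkeq]; exact hgrow n m
      have hGn : G n = (1 - c ^ m) / (1 + c ^ m) := by
        rw [hG]
        dsimp only
        rw [if_pos hnk, hh]
        dsimp only
        congr 2 <;> · congr 1; omega
      rw [hGn]
      calc (1 - c ^ m) / (1 + c ^ m)
          ≤ (‖w k‖ - ‖w n‖) /
            (1 - ‖w k‖ * ‖w n‖) :=
            lemA (norm_nonneg _) (habs n) (habs k) hcm0 hcm1 hgr
        _ ≤ pd (w k) (w n) := lemB (w k) (w n) (habs k) (habs n)
    · set m := n - k with hm
      have hm1 : 1 ≤ m := by omega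
      have hkeq : n = k + m := by omega
      obtain ⟨hcm0, hcm1⟩ := hcpow m hm1
      have hgr : 1 - ‖w n‖ ≤ c ^ m * (1 - ‖w k‖) := by
        rw [hkeq]; exact hgrow k m
      have hGn : G n = (1 - c ^ m) / (1 + c ^ m) := by
        rw [hG]
        dsimp only
        rw [if_neg hnk, hh]
        dsimp only
        congr 2 <;> · congr 1; omega
      rw [hGn, pd_comm]
      calc (1 - c ^ m) / (1 + c ^ m)
          ≤ (‖w n‖ - ‖w k‖) /
            (1 - ‖w n‖ * ‖w k‖) :=
            lemA (norm_nonneg _) (habs k) (habs n) hcm0 hcm1 hgr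
        _ ≤ pd (w n) (w k) := lemB (w n) (w k) (habs n) (habs k)
  -- key finset estimate
  have hkey : ∀ T : Finset ℕ, k ∉ T → P ^ 2 ≤ ∏ n ∈ T, pd (w k) (w n) := by
    intro T hkT
    have step1 : ∏ n ∈ T, G n ≤ ∏ n ∈ T, pd (w k) (w n) :=
      Finset.prod_le_prod (fun n _ => (hGpos n).le)
        (fun n hnT => hbound n (fun hnk => hkT (hnk ▸ hnT)))
    have step2 : P ^ 2 ≤ ∏ n ∈ T, G n := by
      rw [← Finset.prod_filter_mul_prod_filter_not T (· < k)]
      have hT1 : P ≤ ∏ n ∈ T.filter (· < k), G n := by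
        have himg : ∏ n ∈ (T.filter (· < k)).image (fun n => k - n - 1), h n =
            ∏ n ∈ T.filter (· < k), h (k - n - 1) := by
          apply Finset.prod_image
          intro a ha b hb hab
          simp only [Finset.mem_coe, Finset.mem_filter] at ha hb hab
          omega
        have heq : ∏ n ∈ T.filter (· < k), G n =
            ∏ n ∈ T.filter (· < k), h (k - n - 1) := by
          apply Finset.prod_congr rfl
          intro n hn
          simp only [Finset.mem_filter] at hn
          rw [hG]
          dsimp only
          rw [if_pos hn.2]
        rw [heq, ← himg]
        exact hPle _
      have hT2 : P ≤ ∏ n ∈ T.filter (fun n => ¬ n < k), G n := by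
        have himg : ∏ n ∈ (T.filter (fun n => ¬ n < k)).image (fun n => n - k - 1), h n =
            ∏ n ∈ T.filter (fun n => ¬ n < k), h (n - k - 1) := by
          apply Finset.prod_image
          intro a ha b hb hab
          simp only [Finset.mem_coe, Finset.mem_filter] at ha hb hab
          have hak : a ≠ k := fun h => ha.1 |> (fun haT => hkT (h ▸ haT))
          have hbk : b ≠ k := fun h => hb.1 |> (fun hbT => hkT (h ▸ hbT))
          omega
        have heq : ∏ n ∈ T.filter (fun n => ¬ n < k), G n =
            ∏ n ∈ T.filter (fun n => ¬ n < k), h (n - k - 1) := by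
          apply Finset.prod_congr rfl
          intro n hn
          simp only [Finset.mem_filter] at hn
          rw [hG]
          dsimp only
          rw [if_neg hn.2]
        rw [heq, ← himg]
        exact hPle _
      have hprod1 : 0 ≤ ∏ n ∈ T.filter (· < k), G n :=
        Finset.prod_nonneg (fun n _ => (hGpos n).le)
      calc P ^ 2 = P * P := sq P
        _ ≤ (∏ n ∈ T.filter (· < k), G n) * ∏ n ∈ T.filter (fun n => ¬ n < k), G n :=
            mul_le_mul hT1 hT2 hP0 hprod1
    linarith
  -- conclude
  set f : {j : ℕ // j ≠ k} → ℝ := fun j => pd (w k) (w (j : ℕ)) with hf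
  show P ^ 2 ≤ ∏' j, f j
  by_cases hfm : Multipliable f
  · refine ge_of_tendsto' hfm.hasProd (fun S => ?_)
    have : ∏ j ∈ S, f j = ∏ n ∈ S.image Subtype.val, pd (w k) (w n) := by
      rw [Finset.prod_image (fun a _ b _ hab => Subtype.ext hab)]
    rw [this]
    apply hkey
    intro hkmem
    rw [Finset.mem_image] at hkmem
    obtain ⟨j, _, hj⟩ := hkmem
    exact j.2 hj
  · rw [tprod_eq_one_of_not_multipliable hfm]
    nlinarith
end

section
/- Let {c_n}_{n≥2} be a sequence of positive reals with lim_{n→∞} c_n = 0, and let {z_n}_{n≥1} be a sequence in the open unit disk 𝔻 satisfying (1 - |z_n|)/(1 - |z_{n-1}|) = c_n for all n ≥ 2. Then {z_n} is a thin Blaschke sequence, i.e. lim_{k→∞} ∏_{j : j ≠ k} d(z_k, z_j) = 1. -/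
open Complex Filter Metric

lemma normSq_identity (z w : ℂ) :
    Complex.normSq (1 - (starRingEnd ℂ) z * w) - Complex.normSq (z - w)
      = (1 - Complex.normSq z) * (1 - Complex.normSq w) := by
  simp [Complex.normSq_apply, Complex.mul_re, Complex.mul_im, Complex.sub_re, Complex.sub_im,
    Complex.one_re, Complex.one_im, Complex.conj_re, Complex.conj_im]
  ring

lemma denom_ge (z w : ℂ) (hz : ‖z‖ ≤ 1) (hw : ‖w‖ ≤ 1) :
    max (1 - ‖z‖) (1 - ‖w‖)
      ≤ ‖1 - (starRingEnd ℂ) z * w‖ := by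
  have h1 : ‖(starRingEnd ℂ) z * w‖ = ‖z‖ * ‖w‖ := by
    simp [map_mul]
  have h2 : 1 - ‖z‖ * ‖w‖ ≤ ‖1 - (starRingEnd ℂ) z * w‖ := by
    have := norm_sub_norm_le (1 : ℂ) ((starRingEnd ℂ) z * w)
    simpa [h1] using this
  refine le_trans (max_le ?_ ?_) h2
  · nlinarith [norm_nonneg z, norm_nonneg w]
  · nlinarith [norm_nonneg z, norm_nonneg w]

lemma pd_le_one {z w : ℂ} (hz : ‖z‖ < 1) (hw : ‖w‖ < 1) :
    pd z w ≤ 1 := by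
  have hd : 0 < ‖1 - (starRingEnd ℂ) z * w‖ := by
    have := denom_ge z w hz.le hw.le
    have : 1 - ‖z‖ ≤ ‖1 - (starRingEnd ℂ) z * w‖ :=
      le_trans (le_max_left _ _) this
    linarith
  rw [pd, div_le_one hd]
  have h := normSq_identity z w
  have h1 : Complex.normSq z < 1 := by
    rw [← Complex.sq_norm]; nlinarith [norm_nonneg z]
  have h2 : Complex.normSq w < 1 := by
    rw [← Complex.sq_norm]; nlinarith [norm_nonneg w]
  have hsq : Complex.normSq (z - w) ≤ Complex.normSq (1 - (starRingEnd ℂ) z * w) := by nlinarith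
  have := Complex.sq_norm (z - w)
  have := Complex.sq_norm (1 - (starRingEnd ℂ) z * w)
  nlinarith [norm_nonneg (z - w), norm_nonneg (1 - (starRingEnd ℂ) z * w)]

lemma key_bound {z w : ℂ} (hz : ‖z‖ < 1) (hw : ‖w‖ < 1) :
    1 - pd z w ≤ 4 * min (1 - ‖z‖) (1 - ‖w‖)
      / max (1 - ‖z‖) (1 - ‖w‖) := by
  set A := 1 - ‖z‖ with hA
  set B := 1 - ‖w‖ with hB
  have hApos : 0 < A := by simp [hA]; linarith
  have hBpos : 0 < B := by simp [hB]; linarith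
  set D := ‖1 - (starRingEnd ℂ) z * w‖ with hD
  have hmax : max A B ≤ D := denom_ge z w hz.le hw.le
  have hDpos : 0 < D := lt_of_lt_of_le (lt_max_of_lt_left hApos) hmax
  have hmaxpos : 0 < max A B := lt_max_of_lt_left hApos
  -- 1 - pd ≤ 1 - pd^2
  have hpd0 := pd_nonneg z w
  have hpd1 := pd_le_one hz hw
  have step1 : 1 - pd z w ≤ 1 - (pd z w) ^ 2 := by nlinarith
  -- 1 - pd^2 = (1 - |z|^2)(1 - |w|^2)/D^2
  have hsq : (pd z w) ^ 2 = Complex.normSq (z - w) / D ^ 2 := by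
    rw [pd, div_pow, Complex.sq_norm]
  have hid := normSq_identity z w
  have step2 : 1 - (pd z w) ^ 2
      = (1 - Complex.normSq z) * (1 - Complex.normSq w) / D ^ 2 := by
    rw [hsq, ← hid]
    have : Complex.normSq (1 - (starRingEnd ℂ) z * w) = D ^ 2 := by
      rw [hD, Complex.sq_norm]
    rw [this]
    field_simp
  have hnum : (1 - Complex.normSq z) * (1 - Complex.normSq w) ≤ 4 * (A * B) := by
    have e1 : 1 - Complex.normSq z = A * (1 + ‖z‖) := by
      rw [← Complex.sq_norm, hA]; ring
    have e2 : 1 - Complex.normSq w = B * (1 + ‖w‖) := by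
      rw [← Complex.sq_norm, hB]; ring
    rw [e1, e2]
    have g1 : 1 + ‖z‖ ≤ 2 := by linarith
    have g2 : 1 + ‖w‖ ≤ 2 := by linarith
    have g3 : 0 ≤ 1 + ‖z‖ := by positivity
    have g4 : 0 ≤ 1 + ‖w‖ := by positivity
    calc A * (1 + ‖z‖) * (B * (1 + ‖w‖))
        ≤ (2 * A) * (2 * B) := by
          apply mul_le_mul ?_ ?_ (by positivity) (by positivity)
          · nlinarith
          · nlinarith
      _ = 4 * (A * B) := by ring
  have step3 : (1 - Complex.normSq z) * (1 - Complex.normSq w) / D ^ 2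
      ≤ 4 * (A * B) / (max A B) ^ 2 := by
    apply div_le_div₀ (by positivity) hnum (by positivity)
    nlinarith
  have step4 : 4 * (A * B) / (max A B) ^ 2 = 4 * min A B / max A B := by
    rw [div_eq_div_iff (by positivity) hmaxpos.ne']
    linear_combination (-4 * (max A B)) * (min_mul_max A B)
  calc 1 - pd z w ≤ 1 - (pd z w)^2 := step1
    _ = (1 - Complex.normSq z) * (1 - Complex.normSq w) / D ^ 2 := step2
    _ ≤ 4 * (A * B) / (max A B) ^ 2 := step3
    _ = 4 * min A B / max A B := step4

lemma sum_geom_tail (ε : ℝ) (h0 : 0 ≤ ε) (h1 : ε < 1) (G : Finset ℕ) (d : ℕ → ℕ)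
    (hinj : Set.InjOn d G) (hd1 : ∀ j ∈ G, 1 ≤ d j) :
    ∑ j ∈ G, ε ^ d j ≤ ε * (1 - ε)⁻¹ := by
  have hsummable : Summable (fun i : ℕ => ε ^ (i + 1)) := by
    have := (summable_geometric_of_lt_one h0 h1).mul_left ε
    apply this.congr
    intro i; ring
  have htsum : ∑' i : ℕ, ε ^ (i + 1) = ε * (1 - ε)⁻¹ := by
    calc ∑' i : ℕ, ε ^ (i+1) = ∑' i : ℕ, ε * ε ^ i := by
          congr 1; ext i; ring
      _ = ε * (1-ε)⁻¹ := by rw [tsum_mul_left, tsum_geometric_of_lt_one h0 h1]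
  have himg : ∑ i ∈ G.image (fun j => d j - 1), ε ^ (i + 1) = ∑ j ∈ G, ε ^ d j := by
    rw [Finset.sum_image (fun x hx y hy hxy => hinj hx hy (by
      have := hd1 x hx; have := hd1 y hy; omega))]
    exact Finset.sum_congr rfl (fun j hj => by have := hd1 j hj; congr 1; omega)
  rw [← himg]
  exact le_trans (Summable.sum_le_tsum _ (fun i _ => pow_nonneg h0 _) hsummable) (le_of_eq htsum)

lemma prod_lower {ι : Type*} (s : Finset ι) (g : ι → ℝ) (h0 : ∀ i ∈ s, 0 ≤ g i)
    (h1 : ∀ i ∈ s, g i ≤ 1) : 1 - ∑ i ∈ s, g i ≤ ∏ i ∈ s, (1 - g i) := by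
  induction s using Finset.cons_induction with
  | empty => simp
  | cons i s hi ih =>
    rw [Finset.sum_cons, Finset.prod_cons]
    have h0i := h0 i (Finset.mem_cons_self i s)
    have h1i := h1 i (Finset.mem_cons_self i s)
    have ih' := ih (fun j hj => h0 j (Finset.mem_cons.2 (Or.inr hj)))
                (fun j hj => h1 j (Finset.mem_cons.2 (Or.inr hj)))
    have hsnn : 0 ≤ ∑ j ∈ s, g j :=
      Finset.sum_nonneg (fun j hj => h0 j (Finset.mem_cons.2 (Or.inr hj)))
    have hmul := mul_le_mul_of_nonneg_left ih' (by linarith : (0:ℝ) ≤ 1 - g i)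
    nlinarith [mul_nonneg h0i hsnn]

set_option maxHeartbeats 1000000 in
/-- If `c_n > 0`, `c_n → 0`, and `{z_n}` is a sequence in the open unit disk with
`(1 - |z_n|)/(1 - |z_{n-1}|) = c_n`, then `{z_n}` is a thin Blaschke sequence:
`lim_{k→∞} ∏_{j ≠ k} d(z_k, z_j) = 1`. -/
theorem stmt1 (c : ℕ → ℝ) (hpos : ∀ n, 0 < c n) (hc : Tendsto c atTop (nhds 0))
    (z : ℕ → ℂ) (hz : ∀ n, z n ∈ ball (0 : ℂ) 1)
    (hratio : ∀ n, (1 - ‖z (n + 1)‖) / (1 - ‖z n‖) = c n) :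
    Tendsto (fun k => ∏' j : {j : ℕ // j ≠ k}, pd (z k) (z (j : ℕ))) atTop (nhds 1) := by
  have habs : ∀ n, ‖z n‖ < 1 := by
    intro n; have := hz n; rwa [mem_ball_zero_iff] at this
  set a : ℕ → ℝ := fun n => 1 - ‖z n‖ with ha_def
  have hapos : ∀ n, 0 < a n := fun n => by simp only [ha_def]; linarith [habs n]
  have hrec : ∀ n, a (n + 1) = c n * a n := by
    intro n
    have h := hratio n
    rw [div_eq_iff (hapos n).ne'] at h
    exact h
  rw [Metric.tendsto_atTop]
  intro ε₀ hε₀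
  set ε := min (1/2 : ℝ) (ε₀ / 21) with hε_def
  have hεpos : 0 < ε := lt_min (by norm_num) (by positivity)
  have hεhalf : ε ≤ 1/2 := min_le_left _ _
  have hεlt1 : ε < 1 := lt_of_le_of_lt hεhalf (by norm_num)
  -- tail smallness of c
  obtain ⟨N, hN⟩ : ∃ N, ∀ n ≥ N, c n ≤ ε := by
    have := eventually_atTop.mp (hc.eventually (gt_mem_nhds hεpos))
    obtain ⟨N, hN⟩ := this
    exact ⟨N, fun n hn => (hN n hn).le⟩
  -- geometric decay
  have hdec : ∀ m n, N ≤ m → m ≤ n → a n ≤ ε ^ (n - m) * a m := by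
    intro m n hNm hmn
    induction n, hmn using Nat.le_induction with
    | base => simp
    | succ n hmn ih =>
      have hcn : c n ≤ ε := hN n (le_trans hNm hmn)
      have h1 : a (n + 1) ≤ ε * a n := by
        rw [hrec n]
        exact mul_le_mul_of_nonneg_right hcn (hapos n).le
      have h2 : ε * a n ≤ ε * (ε ^ (n - m) * a m) :=
        mul_le_mul_of_nonneg_left ih hεpos.le
      have h3 : ε * (ε ^ (n - m) * a m) = ε ^ (n + 1 - m) * a m := by
        have : n + 1 - m = (n - m) + 1 := by omega
        rw [this, pow_succ]; ring
      linarith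
  -- lower bound on a j for j ≤ N
  set m₀ : ℝ := (Finset.range (N + 1)).inf' (by simp) a with hm₀_def
  have hm₀pos : 0 < m₀ := by
    rw [hm₀_def, Finset.lt_inf'_iff]
    exact fun j _ => hapos j
  have hm₀le : ∀ j, j ≤ N → m₀ ≤ a j := by
    intro j hj
    exact Finset.inf'_le a (Finset.mem_range.2 (by omega))
  -- a tends to 0
  have ha0 : Tendsto a atTop (nhds 0) := by
    have hg : Tendsto (fun k => ε ^ (k - N) * a N) atTop (nhds 0) := by
      have h1 : Tendsto (fun k : ℕ => ε ^ (k - N)) atTop (nhds 0) :=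
        (tendsto_pow_atTop_nhds_zero_of_lt_one hεpos.le hεlt1).comp
          (tendsto_sub_atTop_nat N)
      simpa using h1.mul_const (a N)
    apply squeeze_zero' (Eventually.of_forall (fun k => (hapos k).le))
      (eventually_atTop.2 ⟨N, fun k hk => hdec N k le_rfl hk⟩) hg
  -- choose K
  set t : ℝ := ε * m₀ / (N + 1) with ht_def
  have htpos : 0 < t := by positivity
  obtain ⟨K₁, hK₁⟩ := eventually_atTop.mp (ha0.eventually (gt_mem_nhds htpos))
  set K := max K₁ (N + 1) with hK_def
  refine ⟨K, fun k hk => ?_⟩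
  have hkN : N < k := by
    have := le_trans (le_max_right K₁ (N + 1)) hk
    omega
  have hak : a k < ε * m₀ / (N + 1) := hK₁ k (le_trans (le_max_left _ _) hk)
  have hak' : a k * ((N : ℝ) + 1) < ε * m₀ :=
    (lt_div_iff₀ (by positivity)).mp hak
  -- the key finite-sum bound over finsets of indices ≠ k
  have csum : ∀ S : Finset ℕ, (∀ j ∈ S, j ≠ k) →
      ∑ j ∈ S, (1 - pd (z k) (z j)) ≤ 20 * ε := by
    intro S hS
    set d : ℕ → ℕ := fun j => (k - j) + (j - k) with hd_def
    set bnd : ℕ → ℝ := fun j => if j < N then 4 * (ε / (N + 1)) else 4 * ε ^ d j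
      with hbnd_def
    have hbndnn : ∀ j, 0 ≤ bnd j := by
      intro j
      rw [hbnd_def]
      by_cases hjN : j < N <;> simp [hjN] <;> positivity
    have hterm : ∀ j ∈ S, 1 - pd (z k) (z j) ≤ bnd j := by
      intro j hj
      have hjk := hS j hj
      have hkey : 1 - pd (z k) (z j) ≤ 4 * min (a k) (a j) / max (a k) (a j) :=
        key_bound (habs k) (habs j)
      by_cases hjN : j < N
      · have hja : m₀ ≤ a j := hm₀le j (by omega)
        have hka : a k ≤ a j := by
          nlinarith [hak', hja, hm₀pos, hεlt1,
            mul_nonneg (hapos k).le (Nat.cast_nonneg N : (0:ℝ) ≤ N),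
            mul_nonneg (by linarith : (0:ℝ) ≤ 1 - ε) hm₀pos.le]
        have hbase : a k / a j ≤ ε / ((N : ℝ) + 1) := by
          rw [div_le_div_iff₀ (hapos j) (by positivity)]
          nlinarith [mul_le_mul_of_nonneg_left hja hεpos.le]
        have : 4 * min (a k) (a j) / max (a k) (a j) ≤ 4 * (ε / (N + 1)) := by
          rw [min_eq_left hka, max_eq_right hka]
          calc 4 * a k / a j = 4 * (a k / a j) := by ring
            _ ≤ 4 * (ε / (N + 1)) := by
                exact mul_le_mul_of_nonneg_left hbase (by norm_num)
        rw [hbnd_def]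
        simp only [if_pos hjN]
        linarith
      · have hbndj : bnd j = 4 * ε ^ d j := by rw [hbnd_def]; simp [hjN]
        rw [hbndj]
        rcases lt_or_gt_of_ne hjk with hjlt | hjgt
        · -- j < k, N ≤ j
          have hdecjk : a k ≤ ε ^ (k - j) * a j := hdec j k (by omega) (by omega)
          have hpow1 : ε ^ (k - j) ≤ 1 := pow_le_one₀ hεpos.le hεlt1.le
          have hka : a k ≤ a j := by nlinarith [hapos j]
          have hdj : d j = k - j := by simp only [hd_def]; omega
          rw [hdj]
          have : 4 * min (a k) (a j) / max (a k) (a j) ≤ 4 * ε ^ (k - j) := by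
            rw [min_eq_left hka, max_eq_right hka, div_le_iff₀ (hapos j)]
            nlinarith [hdecjk]
          linarith
        · -- k < j, N ≤ k
          have hdecjk : a j ≤ ε ^ (j - k) * a k := hdec k j (by omega) (by omega)
          have hpow1 : ε ^ (j - k) ≤ 1 := pow_le_one₀ hεpos.le hεlt1.le
          have hka : a j ≤ a k := by nlinarith [hapos k]
          have hdj : d j = j - k := by simp only [hd_def]; omega
          rw [hdj]
          have : 4 * min (a k) (a j) / max (a k) (a j) ≤ 4 * ε ^ (j - k) := by
            rw [min_eq_right hka, max_eq_left hka, div_le_iff₀ (hapos k)]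
            nlinarith [hdecjk]
          linarith
    have hεinv : ε * (1 - ε)⁻¹ ≤ 2 * ε := by
      have h2 : (1 - ε)⁻¹ ≤ (1/2 : ℝ)⁻¹ := by
        apply inv_anti₀ (by norm_num)
        linarith
      have : (1/2 : ℝ)⁻¹ = 2 := by norm_num
      rw [this] at h2
      nlinarith [hεpos]
    have part1 : ∑ j ∈ S.filter (fun j => j < N), bnd j ≤ 4 * ε := by
      have hconst : ∀ j ∈ S.filter (fun j => j < N), bnd j = 4 * (ε / (N + 1)) := by
        intro j hj
        have := (Finset.mem_filter.1 hj).2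
        rw [hbnd_def]; simp [this]
      rw [Finset.sum_congr rfl hconst, Finset.sum_const, nsmul_eq_mul]
      have hcard : ((S.filter (fun j => j < N)).card : ℝ) ≤ (N : ℝ) + 1 := by
        have hsub : S.filter (fun j => j < N) ⊆ Finset.range N := by
          intro j hj
          exact Finset.mem_range.2 (Finset.mem_filter.1 hj).2
        have := Finset.card_le_card hsub
        rw [Finset.card_range] at this
        exact_mod_cast le_trans (Nat.cast_le.2 this) (by linarith : (N : ℝ) ≤ (N : ℝ) + 1)
      calc ((S.filter (fun j => j < N)).card : ℝ) * (4 * (ε / (N + 1)))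
          ≤ ((N : ℝ) + 1) * (4 * (ε / (N + 1))) :=
            mul_le_mul_of_nonneg_right hcard (by positivity)
        _ = 4 * ε := by field_simp
    have part2 : ∑ j ∈ S.filter (fun j => ¬ j < N), bnd j ≤ 16 * ε := by
      set T := S.filter (fun j => ¬ j < N) with hT_def
      have hconst : ∀ j ∈ T, bnd j = 4 * ε ^ d j := by
        intro j hj
        have := (Finset.mem_filter.1 hj).2
        rw [hbnd_def]; simp [this]
      rw [Finset.sum_congr rfl hconst, ← Finset.mul_sum]
      have hsplit : ∑ j ∈ T, ε ^ d j
          = ∑ j ∈ T.filter (fun j => j < k), ε ^ d j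
            + ∑ j ∈ T.filter (fun j => ¬ j < k), ε ^ d j :=
        (Finset.sum_filter_add_sum_filter_not T _ _).symm
      have hp1 : ∑ j ∈ T.filter (fun j => j < k), ε ^ d j ≤ ε * (1 - ε)⁻¹ := by
        apply sum_geom_tail ε hεpos.le hεlt1
        · intro x hx y hy hxy
          have hxk := (Finset.mem_filter.1 hx).2
          have hyk := (Finset.mem_filter.1 hy).2
          simp only [hd_def] at hxy
          omega
        · intro j hj
          have hjk := (Finset.mem_filter.1 hj).2
          simp only [hd_def]
          omega
      have hp2 : ∑ j ∈ T.filter (fun j => ¬ j < k), ε ^ d j ≤ ε * (1 - ε)⁻¹ := by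
        apply sum_geom_tail ε hεpos.le hεlt1
        · intro x hx y hy hxy
          have hxk := (Finset.mem_filter.1 hx).2
          have hyk := (Finset.mem_filter.1 hy).2
          have hxne := hS x (Finset.mem_filter.1 ((Finset.mem_filter.1 hx).1)).1
          have hyne := hS y (Finset.mem_filter.1 ((Finset.mem_filter.1 hy).1)).1
          simp only [hd_def] at hxy
          omega
        · intro j hj
          have hjk := (Finset.mem_filter.1 hj).2
          have hjne := hS j (Finset.mem_filter.1 ((Finset.mem_filter.1 hj).1)).1
          simp only [hd_def]
          omega
      have : ∑ j ∈ T, ε ^ d j ≤ 4 * ε := by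
        rw [hsplit]
        linarith
      nlinarith [Finset.sum_nonneg (fun j (_ : j ∈ T) => pow_nonneg hεpos.le (d j))]
    calc ∑ j ∈ S, (1 - pd (z k) (z j)) ≤ ∑ j ∈ S, bnd j := Finset.sum_le_sum hterm
      _ = ∑ j ∈ S.filter (fun j => j < N), bnd j
          + ∑ j ∈ S.filter (fun j => ¬ j < N), bnd j :=
        (Finset.sum_filter_add_sum_filter_not S _ _).symm
      _ ≤ 4 * ε + 16 * ε := add_le_add part1 part2
      _ = 20 * ε := by ring
  -- now the infinite product
  set f : {j : ℕ // j ≠ k} → ℝ := fun j => pd (z k) (z (j : ℕ)) with hf_def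
  have hf0 : ∀ j, 0 ≤ f j := fun j => pd_nonneg _ _
  have hf1 : ∀ j, f j ≤ 1 := fun j => pd_le_one (habs k) (habs (j : ℕ))
  have hsum_sub : ∀ s : Finset {j : ℕ // j ≠ k}, ∑ j ∈ s, (1 - f j) ≤ 20 * ε := by
    intro s
    have himg : ∑ j ∈ s.image Subtype.val, (1 - pd (z k) (z j)) = ∑ j ∈ s, (1 - f j) := by
      rw [Finset.sum_image (fun x _ y _ h => Subtype.ext h)]
    rw [← himg]
    apply csum
    intro j hj
    obtain ⟨x, _, rfl⟩ := Finset.mem_image.1 hj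
    exact x.2
  have hprod_ge : ∀ s : Finset {j : ℕ // j ≠ k}, 1 - 20 * ε ≤ ∏ j ∈ s, f j := by
    intro s
    have hlow := prod_lower s (fun j => 1 - f j)
      (fun j _ => by show (0:ℝ) ≤ 1 - f j; linarith [hf1 j])
      (fun j _ => by show 1 - f j ≤ (1:ℝ); linarith [hf0 j])
    have heq : ∏ j ∈ s, (1 - (1 - f j)) = ∏ j ∈ s, f j := by
      apply Finset.prod_congr rfl
      intro j _
      ring
    rw [heq] at hlow
    linarith [hsum_sub s]
  have hbounds : (∏' j, f j) ≤ 1 ∧ 1 - 20 * ε ≤ ∏' j, f j := by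
    by_cases hM : Multipliable f
    · constructor
      · exact le_of_tendsto hM.hasProd (Eventually.of_forall fun s =>
          Finset.prod_le_one (fun j _ => hf0 j) (fun j _ => hf1 j))
      · exact ge_of_tendsto hM.hasProd (Eventually.of_forall hprod_ge)
    · rw [tprod_eq_one_of_not_multipliable hM]
      exact ⟨le_refl 1, by linarith [hεpos]⟩
  have h20 : 20 * ε < ε₀ := by
    have hle : ε ≤ ε₀ / 21 := min_le_right _ _
    linarith
  show dist (∏' j, f j) 1 < ε₀
  rw [Real.dist_eq, abs_sub_comm, _root_.abs_of_nonneg (by linarith [hbounds.1])]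
  linarith [hbounds.2]
end

section
/- Let x, y ∈ (0,1) and let θ ∈ ℝ be such that the point 1 - y·e^{iθ} lies in the open unit disk 𝔻. Then d(1-x, 1-y·e^{iθ}) ≥ d(1-x, 1-y) = |x - y|/(x + y - xy); explicitly, |(1-x) - (1 - y e^{iθ})| / |1 - (1-x)(1 - y e^{-iθ})| ≥ |x - y|/(x + y - xy). -/
open Complex Filter Metric

set_option maxHeartbeats 1600000 in
/-- For `x, y ∈ (0,1)` and `θ ∈ ℝ` with `1 - y e^{iθ}` in the unit disk,
`d(1-x, 1-y e^{iθ}) ≥ d(1-x, 1-y) = |x-y|/(x+y-xy)`. -/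
theorem stmt4 (x y : ℝ) (hx : x ∈ Set.Ioo (0 : ℝ) 1) (hy : y ∈ Set.Ioo (0 : ℝ) 1)
    (θ : ℝ) (hmem : (1 - (y : ℂ) * Complex.exp (Complex.I * θ)) ∈ ball (0 : ℂ) 1) :
    pd (1 - (x : ℂ)) (1 - (y : ℂ)) = |x - y| / (x + y - x * y) ∧
    pd (1 - (x : ℂ)) (1 - (y : ℂ) * Complex.exp (Complex.I * θ)) ≥
      |x - y| / (x + y - x * y) := by
  obtain ⟨hx0, hx1⟩ := hx
  obtain ⟨hy0, hy1⟩ := hy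
  have hden : 0 < x + y - x * y := by nlinarith
  set p := Real.cos θ with hp
  set q := Real.sin θ with hq
  have he : Complex.exp (Complex.I * θ) = (p : ℂ) + (q : ℂ) * Complex.I := by
    rw [mul_comm, Complex.exp_mul_I, ← Complex.ofReal_cos, ← Complex.ofReal_sin]
  have hpq : p ^ 2 + q ^ 2 = 1 := by
    rw [hp, hq]; nlinarith [Real.sin_sq_add_cos_sq θ]
  have hple : p ≤ 1 := Real.cos_le_one θ
  -- from hmem
  have habs : ‖1 - (y : ℂ) * Complex.exp (Complex.I * θ)‖ < 1 := by
    simpa [Complex.dist_eq] using hmem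
  have hlt : (1 - y * p) ^ 2 + (y * q) ^ 2 < 1 := by
    have h2 : Complex.normSq (1 - (y : ℂ) * Complex.exp (Complex.I * θ)) < 1 := by
      rw [← Complex.sq_norm]; nlinarith [norm_nonneg (1 - (y : ℂ) * Complex.exp (Complex.I * θ))]
    rw [he] at h2
    simp [Complex.normSq_apply] at h2
    nlinarith [h2]
  have hyp : y < 2 * p := by
    have hyy : y^2*(p^2+q^2) = y^2 := by rw [hpq]; ring
    nlinarith [hyy, hlt, hy0]
  have hp0 : 0 < p := by linarith
  constructor
  · have h1 : (1 - (x:ℂ)) - (1 - (y:ℂ)) = ((y - x : ℝ) : ℂ) := by push_cast; ring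
    have h2 : 1 - (starRingEnd ℂ) (1 - (x:ℂ)) * (1 - (y:ℂ)) = ((x + y - x*y : ℝ) : ℂ) := by
      have hc : (starRingEnd ℂ) (1 - (x:ℂ)) = 1 - (x:ℂ) := by
        simp [map_sub, Complex.conj_ofReal]
      rw [hc]; push_cast; ring
    rw [pd, h1, h2, Complex.norm_real, Complex.norm_real, Real.norm_eq_abs, Real.norm_eq_abs, abs_of_pos hden, abs_sub_comm]
  · rw [ge_iff_le, pd]
    set N := ‖(1 - (x:ℂ)) - (1 - (y : ℂ) * Complex.exp (Complex.I * θ))‖ with hN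
    set D := ‖1 - (starRingEnd ℂ) (1 - (x:ℂ)) * (1 - (y : ℂ) * Complex.exp (Complex.I * θ))‖ with hD
    have hN2 : N ^ 2 = (y * p - x) ^ 2 + (y * q) ^ 2 := by
      rw [hN, Complex.sq_norm, he]
      simp [Complex.normSq_apply]
      ring
    have hD2 : D ^ 2 = (x + (1 - x) * (y * p)) ^ 2 + ((1 - x) * (y * q)) ^ 2 := by
      rw [hD, Complex.sq_norm, he]
      simp [Complex.normSq_apply]
      ring
    have hDpos : 0 < D := by
      have hb : 0 < x + (1 - x) * (y * p) := by nlinarith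
      have h2 : 0 < D ^ 2 := by rw [hD2]; nlinarith [sq_nonneg ((1 - x) * (y * q)), pow_pos hb 2]
      nlinarith [norm_nonneg (1 - (starRingEnd ℂ) (1 - (x:ℂ)) * (1 - (y : ℂ) * Complex.exp (Complex.I * θ))), h2]
    rw [div_le_div_iff₀ hden hDpos]
    have hsq : (|x - y| * D) ^ 2 ≤ (N * (x + y - x * y)) ^ 2 := by
      have : ((x - y) ^ 2) * D ^ 2 ≤ N ^ 2 * (x + y - x * y) ^ 2 := by
        rw [hN2, hD2]
        have key : ((y * p - x) ^ 2 + (y * q) ^ 2) * (x + y - x * y) ^ 2 -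
            (x - y) ^ 2 * ((x + (1 - x) * (y * p)) ^ 2 + ((1 - x) * (y * q)) ^ 2) =
            (y - y * p) * (2 * x * (x + y - x * y) ^ 2 + 2 * x * (1 - x) * (x - y) ^ 2) +
            (p ^ 2 + q ^ 2 - 1) * (y ^ 2 * ((x + y - x * y) ^ 2 - (1 - x) ^ 2 * (x - y) ^ 2)) := by
          ring
        have h1 : 0 ≤ (y - y * p) * (2 * x * (x + y - x * y) ^ 2 + 2 * x * (1 - x) * (x - y) ^ 2) := by
          apply mul_nonneg
          · nlinarith
          · nlinarith [mul_nonneg hx0.le (sq_nonneg (x + y - x * y)),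
              mul_nonneg (mul_nonneg hx0.le (by linarith : (0:ℝ) ≤ 1 - x)) (sq_nonneg (x - y))]
        have h2 : p ^ 2 + q ^ 2 - 1 = 0 := by linarith
        rw [h2] at key
        linarith [key]
      calc (|x - y| * D) ^ 2 = (x - y) ^ 2 * D ^ 2 := by rw [mul_pow, _root_.sq_abs]
        _ ≤ N ^ 2 * (x + y - x * y) ^ 2 := this
        _ = (N * (x + y - x * y)) ^ 2 := by ring
    have h1 : 0 ≤ |x - y| * D := by positivity
    have h2 : 0 ≤ N * (x + y - x * y) := by positivity
    exact (pow_le_pow_iff_left₀ h1 h2 two_ne_zero).mp hsq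
end

section
/- Let x_n = 1 - 1/n! for n ≥ 2, let θ₁ be a real number with 0 < |θ₁| < π/2, and for m ≥ 2 set z_m = 1 - (1/m!)·e^{iθ₁} (which lies in 𝔻). Then for every m ≥ 2, ∏_{n ≥ 2, n ≠ m} d(x_n, z_m) ≥ (1/4)·c², where c = ∏_{k=2}^∞ (1 - 1/k!)/(1 + 1/k!). -/
open Complex Filter Metric

/-- The factor `(1 - 1/(k+2)!)/(1 + 1/(k+2)!)`. -/
noncomputable def hh (k : ℕ) : ℝ :=
  (1 - 1 / (Nat.factorial (k + 2) : ℝ)) / (1 + 1 / (Nat.factorial (k + 2) : ℝ))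

lemma fact_ineq (m d : ℕ) (hm : 1 ≤ m) :
    Nat.factorial m * Nat.factorial (d + 1) ≤ Nat.factorial (m + d) := by
  induction d with
  | zero => simp [Nat.factorial]
  | succ d ih =>
      calc m.factorial * (d + 1 + 1).factorial
          = m.factorial * (d + 1).factorial * (d + 2) := by
            rw [Nat.factorial_succ]; ring
        _ ≤ (m + d).factorial * (m + d + 1) := Nat.mul_le_mul ih (by omega)
        _ = (m + d + 1).factorial := by rw [Nat.factorial_succ]; ring

lemma ratio_le {a b p : ℝ} (ha : 0 < a) (hb : 0 < b) (hp : 1 ≤ p) (hab : a * p ≤ b) :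
    (1 - 1 / p) / (1 + 1 / p) ≤ (b - a) / (b + a) := by
  have hp0 : 0 < p := lt_of_lt_of_le one_pos hp
  have hq : a ≤ b * (1 / p) := by
    rw [mul_one_div, le_div_iff₀ hp0]; exact hab
  have h1 : (0:ℝ) < 1 + 1 / p := by positivity
  rw [div_le_div_iff₀ h1 (by positivity)]
  nlinarith [hq, ha.le, hb.le, hp0.le]

lemma two_le_fact {n : ℕ} (hn : 2 ≤ n) : (2:ℝ) ≤ (n.factorial : ℝ) := by
  have h2 : (2:ℕ) ≤ n.factorial := by
    calc (2:ℕ) = Nat.factorial 2 := rfl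
      _ ≤ n.factorial := Nat.factorial_le hn
  exact_mod_cast h2

lemma u_pos (k : ℕ) : 0 < 1 / ((Nat.factorial (k + 2) : ℝ)) := by positivity

lemma u_le_half (k : ℕ) : 1 / ((Nat.factorial (k + 2) : ℝ)) ≤ 1 / 2 := by
  have : (2:ℝ) ≤ ((k+2).factorial : ℝ) := two_le_fact (by omega)
  have h0 : (0:ℝ) < ((k+2).factorial : ℝ) := by positivity
  rw [div_le_div_iff₀ h0 (by norm_num)]
  linarith

lemma hh_pos (k : ℕ) : 0 < hh k := by
  have := u_le_half k
  have := u_pos k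
  unfold hh
  apply div_pos <;> linarith

lemma hh_le_one (k : ℕ) : hh k ≤ 1 := by
  have := u_pos k
  unfold hh
  rw [div_le_one (by linarith)]
  linarith

lemma summable_u : Summable (fun k : ℕ => 1 / ((Nat.factorial (k + 2) : ℝ))) := by
  have h := Real.summable_pow_div_factorial 1
  simp only [one_pow] at h
  exact (summable_nat_add_iff 2).2 h

lemma summable_log_hh : Summable (fun k : ℕ => Real.log (hh k)) := by
  rw [← summable_abs_iff]
  apply Summable.of_nonneg_of_le (fun k => abs_nonneg _) _ (summable_u.mul_left 4)
  intro k
  set u := 1 / ((Nat.factorial (k + 2) : ℝ)) with hu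
  have hu0 := u_pos k
  have hu2 := u_le_half k
  have hpos := hh_pos k
  have hle1 := hh_le_one k
  have habs : |Real.log (hh k)| = Real.log (hh k)⁻¹ := by
    rw [Real.log_inv, abs_of_nonpos (Real.log_nonpos hpos.le hle1)]
  rw [habs]
  have hinv : (hh k)⁻¹ = (1 + u) / (1 - u) := by
    rw [hh, ← hu, inv_div]
  rw [hinv]
  have h1u : (0:ℝ) < (1 + u) / (1 - u) := by
    apply div_pos <;> linarith
  calc Real.log ((1 + u) / (1 - u)) ≤ (1 + u) / (1 - u) - 1 :=
        Real.log_le_sub_one_of_pos h1u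
    _ ≤ 4 * u := by
        rw [div_sub' (by linarith : (1:ℝ) - u ≠ 0), div_le_iff₀ (by linarith)]
        nlinarith

lemma multipliable_hh : Multipliable hh :=
  Real.multipliable_of_summable_log (fun k => hh_pos k) summable_log_hh

lemma c_nonneg : 0 ≤ ∏' k, hh k :=
  ge_of_tendsto' multipliable_hh.hasProd
    (fun s => Finset.prod_nonneg fun j _ => (hh_pos j).le)

lemma c_le_prod (K : Finset ℕ) : (∏' k, hh k) ≤ ∏ j ∈ K, hh j := by
  apply le_of_tendsto multipliable_hh.hasProd
  filter_upwards [Filter.eventually_ge_atTop K] with s hs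
  rw [← Finset.prod_sdiff hs]
  exact mul_le_of_le_one_left (Finset.prod_nonneg fun j _ => (hh_pos j).le)
    (Finset.prod_le_one (fun j _ => (hh_pos j).le) (fun j _ => hh_le_one j))

lemma c_le_one : (∏' k, hh k) ≤ 1 := by
  simpa using c_le_prod ∅

lemma pd_bound {θ : ℝ} {m n : ℕ} (hm : 2 ≤ m) (hn : 2 ≤ n) (hnm : n ≠ m)
    (hz : ‖1 - (1 / (Nat.factorial m : ℂ)) * Complex.exp (Complex.I * θ)‖ < 1) :
    hh (Nat.dist n m - 1) ≤
      pd (1 - 1 / (Nat.factorial n : ℂ))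
        (1 - (1 / (Nat.factorial m : ℂ)) * Complex.exp (Complex.I * θ)) := by
  have hn2 : (2:ℝ) ≤ (n.factorial : ℝ) := two_le_fact hn
  have hm2 : (2:ℝ) ≤ (m.factorial : ℝ) := two_le_fact hm
  set a : ℝ := 1 / (n.factorial : ℝ) with ha
  set b : ℝ := 1 / (m.factorial : ℝ) with hb
  have ha0 : 0 < a := by rw [ha]; positivity
  have hb0 : 0 < b := by rw [hb]; positivity
  have ha1 : a ≤ 1/2 := by
    rw [ha, div_le_div_iff₀ (by linarith) two_pos]; linarith
  have hb1 : b ≤ 1/2 := by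
    rw [hb, div_le_div_iff₀ (by linarith) two_pos]; linarith
  set E := Complex.exp (Complex.I * θ) with hE
  have hEabs : ‖E‖ = 1 := by
    rw [hE, Complex.norm_exp]
    simp
  have hxcast : (1:ℂ) - 1 / (Nat.factorial n : ℂ) = ((1 - a : ℝ) : ℂ) := by
    rw [ha]; push_cast; ring
  have hbcast : (1 / (Nat.factorial m : ℂ)) = ((b : ℝ) : ℂ) := by
    rw [hb]; push_cast; ring
  rw [pd, hxcast, hbcast, Complex.conj_ofReal]
  have hnum : ((1 - a : ℝ) : ℂ) - (1 - (b:ℝ) * E) = (b:ℂ) * E - (a:ℂ) := by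
    push_cast; ring
  have hNum : |b - a| ≤ ‖((1 - a : ℝ):ℂ) - (1 - (b:ℝ) * E)‖ := by
    rw [hnum]
    have h1 : ‖(b:ℂ)*E‖ = b := by
      rw [norm_mul, hEabs, Complex.norm_real, Real.norm_eq_abs, abs_of_pos hb0, mul_one]
    have h2 : ‖(a:ℂ)‖ = a := by rw [Complex.norm_real, Real.norm_eq_abs, abs_of_pos ha0]
    calc |b - a| = |‖(b:ℂ)*E‖ - ‖(a:ℂ)‖| := by rw [h1, h2]
      _ ≤ ‖(b:ℂ)*E - (a:ℂ)‖ := abs_norm_sub_norm_le _ _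
  have hden : (1:ℂ) - ((1 - a:ℝ):ℂ) * (1 - (b:ℝ) * E) = (a:ℂ) + ((b*(1-a) : ℝ):ℂ) * E := by
    push_cast; ring
  have hDle : ‖(1:ℂ) - ((1-a:ℝ):ℂ) * (1 - (b:ℝ)*E)‖ ≤ a + b := by
    rw [hden]
    calc ‖(a:ℂ) + ((b*(1-a):ℝ):ℂ) * E‖
        ≤ ‖(a:ℂ)‖ + ‖((b*(1-a):ℝ):ℂ) * E‖ := norm_add_le _ _
      _ = a + b*(1-a) := by
          rw [norm_mul, hEabs, mul_one, Complex.norm_real, Complex.norm_real, Real.norm_eq_abs, Real.norm_eq_abs,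
            abs_of_pos ha0, _root_.abs_of_nonneg (by nlinarith : (0:ℝ) ≤ b*(1-a))]
      _ ≤ a + b := by nlinarith
  have hDpos : 0 < ‖(1:ℂ) - ((1-a:ℝ):ℂ) * (1 - (b:ℝ)*E)‖ := by
    rcases eq_or_ne ((1:ℂ) - ((1-a:ℝ):ℂ) * (1 - (b:ℝ)*E)) 0 with h0 | h0
    · exfalso
      have hprod : ((1-a:ℝ):ℂ) * (1 - (b:ℝ)*E) = 1 := by linear_combination -h0
      have habs1 : ‖((1-a:ℝ):ℂ) * (1 - (b:ℝ)*E)‖ = 1 := by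
        rw [hprod, norm_one]
      rw [norm_mul, Complex.norm_real, Real.norm_eq_abs,
        _root_.abs_of_nonneg (by linarith : (0:ℝ) ≤ 1 - a)] at habs1
      have hz' : ‖1 - (b:ℝ) * E‖ < 1 := by rw [← hbcast]; exact hz
      nlinarith [norm_nonneg (1 - (b:ℝ)*E)]
    · exact norm_pos_iff.mpr h0
  have hmain : |b - a| / (a + b)
      ≤ ‖((1 - a : ℝ):ℂ) - (1 - (b:ℝ) * E)‖ /
        ‖(1:ℂ) - ((1-a:ℝ):ℂ) * (1 - (b:ℝ)*E)‖ :=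
    div_le_div₀ (norm_nonneg _) hNum hDpos hDle
  refine le_trans ?_ hmain
  have hd1 : 1 ≤ Nat.dist n m := by
    rcases Nat.lt_or_ge n m with h | h
    · simp [Nat.dist]; omega
    · simp [Nat.dist]; omega
  set p : ℝ := ((Nat.dist n m - 1 + 2).factorial : ℝ) with hp
  have hp1 : (1:ℝ) ≤ p := by
    rw [hp]; exact_mod_cast Nat.one_le_iff_ne_zero.2 (Nat.factorial_ne_zero _)
  rw [hh]
  rcases Nat.lt_or_ge m n with hlt | hge
  · -- m < n, a < b
    have hkey : (m.factorial * (Nat.dist n m - 1 + 2).factorial : ℕ) ≤ n.factorial := by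
      have heq : Nat.dist n m - 1 + 2 = (n - m) + 1 := by
        simp [Nat.dist]; omega
      rw [heq]
      have := fact_ineq m (n - m) (by omega)
      calc m.factorial * (n - m + 1).factorial ≤ (m + (n - m)).factorial := this
        _ = n.factorial := by congr 1; omega
    have hkeyR : (m.factorial : ℝ) * p ≤ (n.factorial : ℝ) := by
      rw [hp]; exact_mod_cast hkey
    have hab : a * p ≤ b := by
      rw [ha, hb, div_mul_eq_mul_div, one_mul, div_le_div_iff₀ (by linarith) (by linarith)]
      nlinarith
    calc (1 - 1/p) / (1 + 1/p) ≤ (b - a) / (b + a) := ratio_le ha0 hb0 hp1 hab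
      _ ≤ |b - a| / (a + b) := by
          rw [add_comm b a]
          gcongr
          exact le_abs_self _
  · -- n < m
    have hlt : n < m := by omega
    have hkey : (n.factorial * (Nat.dist n m - 1 + 2).factorial : ℕ) ≤ m.factorial := by
      have heq : Nat.dist n m - 1 + 2 = (m - n) + 1 := by
        simp [Nat.dist]; omega
      rw [heq]
      have := fact_ineq n (m - n) (by omega)
      calc n.factorial * (m - n + 1).factorial ≤ (n + (m - n)).factorial := this
        _ = m.factorial := by congr 1; omega
    have hkeyR : (n.factorial : ℝ) * p ≤ (m.factorial : ℝ) := by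
      rw [hp]; exact_mod_cast hkey
    have hba : b * p ≤ a := by
      rw [ha, hb, div_mul_eq_mul_div, one_mul, div_le_div_iff₀ (by linarith) (by linarith)]
      nlinarith
    calc (1 - 1/p) / (1 + 1/p) ≤ (a - b) / (a + b) := ratio_le hb0 ha0 hp1 hba
      _ ≤ |b - a| / (a + b) := by
          gcongr
          rw [abs_sub_comm]; exact le_abs_self _

/-- With `x_n = 1 - 1/n!` (`n ≥ 2`), `0 < |θ₁| < π/2` and
`z_m = 1 - (1/m!) e^{iθ₁}` (lying in the unit disk), one has
`∏_{n ≥ 2, n ≠ m} d(x_n, z_m) ≥ (1/4) c²` where `c = ∏_{k=2}^∞ (1 - 1/k!)/(1 + 1/k!)`. -/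
theorem stmt5 (θ₁ : ℝ) (h1 : 0 < |θ₁|) (h2 : |θ₁| < Real.pi / 2)
    (hmem : ∀ m : ℕ, 2 ≤ m →
      (1 - (1 / (Nat.factorial m : ℂ)) * Complex.exp (Complex.I * θ₁)) ∈ ball (0 : ℂ) 1) :
    ∀ m : ℕ, 2 ≤ m →
      (∏' n : {n : ℕ // 2 ≤ n ∧ n ≠ m},
          pd (1 - 1 / (Nat.factorial (n : ℕ) : ℂ))
            (1 - (1 / (Nat.factorial m : ℂ)) * Complex.exp (Complex.I * θ₁))) ≥
        (1 / 4) * (∏' k : ℕ,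
          (1 - 1 / (Nat.factorial (k + 2) : ℝ)) / (1 + 1 / (Nat.factorial (k + 2) : ℝ))) ^ 2 := by
  intro m hm
  classical
  have hz : ‖
      (1 - (1 / (Nat.factorial m : ℂ)) * Complex.exp (Complex.I * θ₁))‖ < 1 := by
    have := hmem m hm
    rwa [mem_ball_zero_iff] at this
  set g : {n : ℕ // 2 ≤ n ∧ n ≠ m} → ℝ := fun n =>
    pd (1 - 1 / (Nat.factorial (n : ℕ) : ℂ))
      (1 - (1 / (Nat.factorial m : ℂ)) * Complex.exp (Complex.I * θ₁)) with hg
  show (1 / 4) * (∏' k, hh k) ^ 2 ≤ ∏' n, g n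
  have bound : ∀ s : Finset {n : ℕ // 2 ≤ n ∧ n ≠ m},
      (∏' k, hh k) ^ 2 ≤ ∏ n ∈ s, g n := by
    intro s
    have h1' : ∏ n ∈ s, hh (Nat.dist (n : ℕ) m - 1) ≤ ∏ n ∈ s, g n :=
      Finset.prod_le_prod (fun n _ => (hh_pos _).le)
        (fun n _ => pd_bound hm n.2.1 n.2.2 hz)
    refine le_trans ?_ h1'
    rw [← Finset.prod_filter_mul_prod_filter_not s (fun n => n.1 < m)]
    set k : {n : ℕ // 2 ≤ n ∧ n ≠ m} → ℕ := fun n => Nat.dist (n : ℕ) m - 1 with hk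
    have inj1 : ∀ x ∈ s.filter (fun n => n.1 < m),
        ∀ y ∈ s.filter (fun n => n.1 < m), k x = k y → x = y := by
      intro x hx y hy hxy
      simp only [Finset.mem_filter] at hx hy
      apply Subtype.ext
      have hx2 := x.2.1; have hy2 := y.2.1
      simp only [hk, Nat.dist] at hxy
      omega
    have inj2 : ∀ x ∈ s.filter (fun n => ¬ n.1 < m),
        ∀ y ∈ s.filter (fun n => ¬ n.1 < m), k x = k y → x = y := by
      intro x hx y hy hxy
      simp only [Finset.mem_filter] at hx hy
      apply Subtype.ext
      have hx2 := x.2.2; have hy2 := y.2.2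
      simp only [hk, Nat.dist] at hxy
      omega
    have e1 : (∏' j, hh j) ≤ ∏ n ∈ s.filter (fun n => n.1 < m), hh (k n) := by
      rw [← Finset.prod_image inj1]
      exact c_le_prod _
    have e2 : (∏' j, hh j) ≤ ∏ n ∈ s.filter (fun n => ¬ n.1 < m), hh (k n) := by
      rw [← Finset.prod_image inj2]
      exact c_le_prod _
    rw [pow_two]
    exact mul_le_mul e1 e2 c_nonneg (le_trans c_nonneg e1)
  by_cases hmul : Multipliable g
  · calc (1/4) * (∏' k, hh k) ^ 2 ≤ (∏' k, hh k) ^ 2 := by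
          nlinarith [sq_nonneg (∏' k, hh k)]
      _ ≤ ∏' n, g n := ge_of_tendsto' hmul.hasProd bound
  · rw [tprod_eq_one_of_not_multipliable hmul]
    nlinarith [c_nonneg, c_le_one]
end

section
/- Let θ₁ be a real number with 0 < |θ₁| < π/2. Then lim_{n→∞} d(1 - 1/n!, 1 - (1/n!)·e^{iθ₁}) = |1 - e^{iθ₁}| / |1 + e^{iθ₁}|, and this limit is strictly positive. -/
open Complex Filter Metric

/-- For `0 < |θ₁| < π/2`,
`lim_{n→∞} d(1 - 1/n!, 1 - (1/n!) e^{iθ₁}) = |1 - e^{iθ₁}|/|1 + e^{iθ₁}| > 0`. -/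
theorem stmt6 (θ₁ : ℝ) (h1 : 0 < |θ₁|) (h2 : |θ₁| < Real.pi / 2) :
    Tendsto (fun n : ℕ =>
        pd (1 - 1 / (Nat.factorial n : ℂ))
          (1 - (1 / (Nat.factorial n : ℂ)) * Complex.exp (Complex.I * θ₁))) atTop
      (nhds (‖1 - Complex.exp (Complex.I * θ₁)‖ /
        ‖1 + Complex.exp (Complex.I * θ₁)‖)) ∧
    0 < ‖1 - Complex.exp (Complex.I * θ₁)‖ /
        ‖1 + Complex.exp (Complex.I * θ₁)‖ := by
  have hθ : -(Real.pi/2) < θ₁ ∧ θ₁ < Real.pi/2 := abs_lt.mp h2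
  set E : ℂ := Complex.exp (Complex.I * θ₁) with hE
  have hEre : E.re = Real.cos θ₁ := by
    rw [hE, mul_comm]
    exact Complex.exp_ofReal_mul_I_re θ₁
  have hEim : E.im = Real.sin θ₁ := by
    rw [hE, mul_comm]
    exact Complex.exp_ofReal_mul_I_im θ₁
  have h1E : (1 : ℂ) + E ≠ 0 := by
    intro h
    have : (1 + E).re = 0 := by rw [h]; simp
    rw [Complex.add_re, Complex.one_re, hEre] at this
    have hc : 0 < Real.cos θ₁ := Real.cos_pos_of_mem_Ioo ⟨hθ.1, hθ.2⟩
    linarith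
  have h1E' : (1 : ℂ) - E ≠ 0 := by
    intro h
    have : (1 - E).im = 0 := by rw [h]; simp
    rw [Complex.sub_im, Complex.one_im, hEim] at this
    have hθne : θ₁ ≠ 0 := fun h0 => by simp [h0] at h1
    have hs : Real.sin θ₁ ≠ 0 := by
      intro hs0
      have hpi : Real.pi / 2 < Real.pi := by
        have := Real.pi_pos; linarith
      have := (Real.sin_eq_zero_iff_of_lt_of_lt (by linarith [hθ.1, Real.pi_pos]) (by linarith [hθ.2])).mp hs0
      exact hθne this
    simp at this
    exact hs (by linarith)
  have hpos : 0 < ‖1 - E‖ / ‖1 + E‖ :=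
    div_pos (norm_pos_iff.mpr h1E') (norm_pos_iff.mpr h1E)
  refine ⟨?_, hpos⟩
  -- the function equals n ↦ |1-E| / |1+E - (1/n!) E|
  have heq : ∀ n : ℕ,
      pd (1 - 1 / (Nat.factorial n : ℂ)) (1 - (1 / (Nat.factorial n : ℂ)) * E)
        = ‖1 - E‖ / ‖1 + E - (1 / (Nat.factorial n : ℂ)) * E‖ := by
    intro n
    have hN : ((Nat.factorial n : ℂ)) ≠ 0 := Nat.cast_ne_zero.mpr n.factorial_ne_zero
    have ha : (1 / (Nat.factorial n : ℂ)) ≠ 0 := one_div_ne_zero hN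
    have haabs : ‖1 / (Nat.factorial n : ℂ)‖ ≠ 0 := by
      simpa using (norm_pos_iff.mpr ha).ne'
    unfold pd
    have hconj : (starRingEnd ℂ) (1 - 1 / (Nat.factorial n : ℂ)) = 1 - 1 / (Nat.factorial n : ℂ) := by
      simp [map_sub, map_div₀]
    rw [hconj]
    have hnum : (1 - 1 / (Nat.factorial n : ℂ)) - (1 - (1 / (Nat.factorial n : ℂ)) * E)
        = (1 / (Nat.factorial n : ℂ)) * (E - 1) := by ring
    have hden : (1 : ℂ) - (1 - 1 / (Nat.factorial n : ℂ)) * (1 - (1 / (Nat.factorial n : ℂ)) * E)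
        = (1 / (Nat.factorial n : ℂ)) * (1 + E - (1 / (Nat.factorial n : ℂ)) * E) := by ring
    rw [hnum, hden, norm_mul, norm_mul, mul_div_mul_left _ _ haabs, norm_sub_rev]
  simp only [heq]
  -- now the tendsto
  have hfac : Tendsto (fun n : ℕ => (1 / (Nat.factorial n : ℂ))) atTop (nhds 0) := by
    have h1 : Tendsto (fun n : ℕ => (n.factorial : ℕ)) atTop atTop :=
      tendsto_atTop_mono Nat.self_le_factorial tendsto_id
    have h2 : Tendsto (fun n : ℕ => ((n.factorial : ℝ))) atTop atTop :=
      tendsto_natCast_atTop_atTop.comp h1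
    have h3 : Tendsto (fun n : ℕ => ((n.factorial : ℝ))⁻¹) atTop (nhds 0) :=
      tendsto_inv_atTop_zero.comp h2
    rw [tendsto_zero_iff_norm_tendsto_zero]
    convert h3 using 2 with n
    simp [Complex.norm_natCast]
  have hden : Tendsto (fun n : ℕ => (1 : ℂ) + E - (1 / (Nat.factorial n : ℂ)) * E) atTop
      (nhds (1 + E)) := by
    have h := (tendsto_const_nhds : Tendsto (fun _ : ℕ => (1:ℂ) + E) atTop (nhds (1 + E))).sub (hfac.mul_const E)
    simpa using h
  have habs : Tendsto (fun n : ℕ => ‖(1 : ℂ) + E - (1 / (Nat.factorial n : ℂ)) * E‖) atTop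
      (nhds (‖1 + E‖)) :=
    (continuous_norm.tendsto _).comp hden
  exact tendsto_const_nhds.div habs (by simpa using (norm_pos_iff.mpr h1E).ne')
end

section
/- Let a ∈ 𝔻 with a ∉ ℝ, let x_n = 1 - 1/n! for n ≥ 2, and let B(z) = ((a - z)/(1 - conj(a)·z)) · ∏_{n=2}^∞ (x_n - z)/(1 - x_n·z) for z ∈ 𝔻 (the infinite product converges since ∑_n (1 - x_n) < ∞). Then for every real θ₁ with 0 < |θ₁| < π/2, liminf_{m→∞} |B(1 - (1/m!)·e^{iθ₁})| > 0. -/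
open Complex Filter Metric
open Topology

/-- The thin Blaschke product with simple zeros `a` and `x_n = 1 - 1/n!` (`n ≥ 2`):
`B(z) = ((a - z)/(1 - conj a · z)) · ∏_{n=2}^∞ (x_n - z)/(1 - x_n z)`. -/
noncomputable def B (a : ℂ) (z : ℂ) : ℂ :=
  ((a - z) / (1 - (starRingEnd ℂ) a * z)) *
    ∏' n : ℕ, (((1 - 1 / (Nat.factorial (n + 2) : ℝ)) : ℂ) - z) /
      (1 - ((1 - 1 / (Nat.factorial (n + 2) : ℝ)) : ℂ) * z)

lemma fact_aux {p : ℕ} (hp : 2 ≤ p) : ∀ q : ℕ, p + 1 ≤ q →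
    p.factorial * (q * 2 ^ (q - (p + 1))) ≤ q.factorial := by
  intro q hq
  induction q, hq using Nat.le_induction with
  | base =>
    simp only [Nat.add_sub_cancel, Nat.sub_self, pow_zero, mul_one]
    exact le_of_eq (by rw [Nat.factorial_succ]; ring)
  | succ q hq ih =>
    have he : (q + 1) - (p + 1) = (q - (p + 1)) + 1 := by omega
    rw [he, pow_succ]
    calc p.factorial * ((q + 1) * (2 ^ (q - (p + 1)) * 2))
        = (q + 1) * (p.factorial * (2 * 2 ^ (q - (p + 1)))) := by ring
      _ ≤ (q + 1) * (p.factorial * (q * 2 ^ (q - (p + 1)))) := by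
          have h2q : 2 ≤ q := le_trans hp (by omega)
          exact Nat.mul_le_mul_left _ (Nat.mul_le_mul_left _ (Nat.mul_le_mul_right _ h2q))
      _ ≤ (q + 1) * q.factorial := Nat.mul_le_mul_left _ ih
      _ = (q + 1).factorial := (Nat.factorial_succ q).symm

lemma ratio_lt {k m : ℕ} (hk : 2 ≤ k) (hkm : k + 1 ≤ m) :
    (k.factorial : ℝ) / m.factorial ≤ (1 / m) * (1 / 2) ^ (m - (k + 1)) := by
  have h := fact_aux hk m hkm
  have hfm : (0:ℝ) < m.factorial := by exact_mod_cast m.factorial_pos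
  have h2 : (0:ℝ) < (m:ℝ) * 2 ^ (m - (k + 1)) := by
    have : (0:ℝ) < m := by exact_mod_cast (by omega : 0 < m)
    positivity
  have hcast : (k.factorial : ℝ) * ((m:ℝ) * 2 ^ (m - (k + 1))) ≤ m.factorial := by
    exact_mod_cast h
  have he : (1 / (m:ℝ)) * (1 / 2) ^ (m - (k + 1)) = 1 / ((m:ℝ) * 2 ^ (m - (k + 1))) := by
    rw [div_pow, one_pow, div_mul_div_comm, one_mul]
  rw [div_le_iff₀ hfm, he, one_div, inv_mul_eq_div, le_div_iff₀ h2]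
  linarith

lemma ratio_gt {k m : ℕ} (hm : 2 ≤ m) (hmk : m + 1 ≤ k) :
    (m.factorial : ℝ) / k.factorial ≤ (1 / m) * (1 / 2) ^ (k - (m + 1)) := by
  have h := fact_aux hm k hmk
  have hfk : (0:ℝ) < k.factorial := by exact_mod_cast k.factorial_pos
  have hm0 : (0:ℝ) < m := by exact_mod_cast (by omega : 0 < m)
  have hk0 : (0:ℝ) < (k:ℝ) * 2 ^ (k - (m + 1)) := by
    have : (0:ℝ) < k := by exact_mod_cast (by omega : 0 < k)
    positivity
  have hcast : (m.factorial : ℝ) * ((k:ℝ) * 2 ^ (k - (m + 1))) ≤ k.factorial := by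
    exact_mod_cast h
  have step1 : (m.factorial : ℝ) / k.factorial ≤ 1 / ((k:ℝ) * 2 ^ (k - (m + 1))) := by
    rw [div_le_div_iff₀ hfk hk0]
    linarith
  have step2 : 1 / ((k:ℝ) * 2 ^ (k - (m + 1))) ≤ (1 / m) * (1 / 2) ^ (k - (m + 1)) := by
    have he : (1 / (m:ℝ)) * (1 / 2) ^ (k - (m + 1)) = 1 / ((m:ℝ) * 2 ^ (k - (m + 1))) := by
      rw [div_pow, one_pow, div_mul_div_comm, one_mul]
    rw [he]
    gcongr
    exact_mod_cast (by omega : m ≤ k)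
  linarith

lemma one_sub_sum_le_prod (v : ℕ → ℝ) (F : Finset ℕ) (h0 : ∀ n ∈ F, 0 ≤ v n)
    (h1 : ∀ n ∈ F, v n ≤ 1) : 1 - ∑ n ∈ F, v n ≤ ∏ n ∈ F, (1 - v n) := by
  classical
  induction F using Finset.induction_on with
  | empty => simp
  | @insert a s ha ih =>
    rw [Finset.sum_insert ha, Finset.prod_insert ha]
    have hva0 := h0 a (Finset.mem_insert_self a s)
    have hva1 := h1 a (Finset.mem_insert_self a s)
    have hs0 : ∀ n ∈ s, 0 ≤ v n := fun n hn => h0 n (Finset.mem_insert_of_mem hn)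
    have hs1 : ∀ n ∈ s, v n ≤ 1 := fun n hn => h1 n (Finset.mem_insert_of_mem hn)
    have ihs := ih hs0 hs1
    have hS0 : 0 ≤ ∑ n ∈ s, v n := Finset.sum_nonneg hs0
    have h1a : (0:ℝ) ≤ 1 - v a := by linarith
    nlinarith [mul_le_mul_of_nonneg_left ihs h1a, mul_nonneg hva0 hS0]

lemma sum_bound (m : ℕ) (hm : 3 ≤ m) (c : ℝ) (hc : 0 ≤ c) (v : ℕ → ℝ)
    (hub : ∀ n, n ≠ m - 2 →
      v n ≤ c * (1 / 2) ^ (if n + 2 < m then m - (n + 3) else n + 1 - m))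
    (h0 : ∀ n, 0 ≤ v n) (F : Finset ℕ) (hF : m - 2 ∉ F) :
    ∑ n ∈ F, v n ≤ 4 * c := by
  classical
  have hsplit := Finset.sum_filter_add_sum_filter_not F (fun n => n + 2 < m) v
  have h1 : ∑ n ∈ F.filter (fun n => n + 2 < m), v n ≤ 2 * c := by
    calc ∑ n ∈ F.filter (fun n => n + 2 < m), v n
        ≤ ∑ n ∈ F.filter (fun n => n + 2 < m), c * (1 / 2 : ℝ) ^ (m - (n + 3)) := by
          apply Finset.sum_le_sum
          intro n hn
          have hn' := Finset.mem_filter.mp hn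
          have hne : n ≠ m - 2 := by omega
          have := hub n hne
          rwa [if_pos hn'.2] at this
      _ ≤ ∑ n ∈ Finset.range (m - 2), c * (1 / 2 : ℝ) ^ (m - (n + 3)) := by
          apply Finset.sum_le_sum_of_subset_of_nonneg
          · intro n hn
            have hn' := Finset.mem_filter.mp hn
            exact Finset.mem_range.mpr (by omega)
          · intro n _ _; positivity
      _ = c * ∑ n ∈ Finset.range (m - 2), (1 / 2 : ℝ) ^ ((m - 2) - 1 - n) := by
          rw [Finset.mul_sum]
          apply Finset.sum_congr rfl
          intro n hn
          have hn' := Finset.mem_range.mp hn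
          congr 2
          omega
      _ = c * ∑ n ∈ Finset.range (m - 2), (1 / 2 : ℝ) ^ n := by
          rw [Finset.sum_range_reflect]
      _ ≤ c * 2 := mul_le_mul_of_nonneg_left (sum_geometric_two_le _) hc
      _ = 2 * c := by ring
  have h2 : ∑ n ∈ F.filter (fun n => ¬ n + 2 < m), v n ≤ 2 * c := by
    set M := F.sup id + 1 with hM
    calc ∑ n ∈ F.filter (fun n => ¬ n + 2 < m), v n
        ≤ ∑ n ∈ F.filter (fun n => ¬ n + 2 < m), c * (1 / 2 : ℝ) ^ (n + 1 - m) := by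
          apply Finset.sum_le_sum
          intro n hn
          have hn' := Finset.mem_filter.mp hn
          have hne : n ≠ m - 2 := fun h => hF (h ▸ hn'.1)
          have := hub n hne
          rwa [if_neg hn'.2] at this
      _ ≤ ∑ n ∈ Finset.Ico (m - 1) M, c * (1 / 2 : ℝ) ^ (n + 1 - m) := by
          apply Finset.sum_le_sum_of_subset_of_nonneg
          · intro n hn
            have hn' := Finset.mem_filter.mp hn
            have hnF := hn'.1
            have hle : n ≤ F.sup id := Finset.le_sup (f := id) hnF
            have hne : n ≠ m - 2 := fun h => hF (h ▸ hnF)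
            exact Finset.mem_Ico.mpr ⟨by omega, by omega⟩
          · intro n _ _; positivity
      _ = ∑ i ∈ Finset.range (M - (m - 1)), c * (1 / 2 : ℝ) ^ ((m - 1) + i + 1 - m) := by
          rw [Finset.sum_Ico_eq_sum_range]
      _ = c * ∑ i ∈ Finset.range (M - (m - 1)), (1 / 2 : ℝ) ^ i := by
          rw [Finset.mul_sum]
          apply Finset.sum_congr rfl
          intro i _
          congr 2
          omega
      _ ≤ c * 2 := mul_le_mul_of_nonneg_left (sum_geometric_two_le _) hc
      _ = 2 * c := by ring
  linarith

lemma exp_I_theta (θ : ℝ) : Complex.exp (Complex.I * θ) =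
    Complex.ofReal (Real.cos θ) + Complex.ofReal (Real.sin θ) * Complex.I := by
  rw [mul_comm, Complex.exp_mul_I, Complex.ofReal_cos, Complex.ofReal_sin]

lemma core (θ t δ : ℝ) (hc : 0 < Real.cos θ) (hsne : Real.sin θ ≠ 0)
    (hδ0 : 0 < δ) (hδc : δ ≤ Real.cos θ)
    (ht0 : 0 < t) (ht1 : t ≤ 1 / 2) :
    (1 - ((1 - t : ℝ) : ℂ) * (1 - (δ : ℂ) * Complex.exp (Complex.I * θ))) ≠ 0 ∧
    δ * |Real.sin θ| / 2 ≤
      ‖1 - ((1 - t : ℝ) : ℂ) * (1 - (δ : ℂ) * Complex.exp (Complex.I * θ))‖ ∧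
    ‖(((1 - t : ℝ) : ℂ) - (1 - (δ : ℂ) * Complex.exp (Complex.I * θ))) /
        (1 - ((1 - t : ℝ) : ℂ) * (1 - (δ : ℂ) * Complex.exp (Complex.I * θ)))‖ ≤ 1 ∧
    1 - 4 * (δ / t) ≤
      ‖(((1 - t : ℝ) : ℂ) - (1 - (δ : ℂ) * Complex.exp (Complex.I * θ))) /
        (1 - ((1 - t : ℝ) : ℂ) * (1 - (δ : ℂ) * Complex.exp (Complex.I * θ)))‖ ∧
    1 - 16 * (t / δ) / Real.sin θ ^ 2 ≤
      ‖(((1 - t : ℝ) : ℂ) - (1 - (δ : ℂ) * Complex.exp (Complex.I * θ))) /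
        (1 - ((1 - t : ℝ) : ℂ) * (1 - (δ : ℂ) * Complex.exp (Complex.I * θ)))‖ := by
  have hE := exp_I_theta θ
  set c := Real.cos θ with hcdef
  set s := Real.sin θ with hsdef
  set z : ℂ := 1 - (δ : ℂ) * Complex.exp (Complex.I * θ) with hzdef
  have hzre : z.re = 1 - δ * c := by
    simp [hzdef, hE, Complex.sub_re, Complex.mul_re]
  have hzim : z.im = -(δ * s) := by
    simp [hzdef, hE, Complex.sub_im, Complex.mul_im]
  have hcs : c ^ 2 + s ^ 2 = 1 := by
    rw [hcdef, hsdef, add_comm]; exact Real.sin_sq_add_cos_sq θ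
  have hc1 : c ≤ 1 := Real.cos_le_one θ
  have hnz : Complex.normSq z = 1 - δ * (2 * c - δ) := by
    rw [Complex.normSq_apply, hzre, hzim]
    linear_combination (δ ^ 2) * hcs
  have h1mz_pos : 0 < 1 - Complex.normSq z := by rw [hnz]; nlinarith
  have h1mz_le : 1 - Complex.normSq z ≤ 2 * δ := by rw [hnz]; nlinarith
  set den : ℂ := 1 - ((1 - t : ℝ) : ℂ) * z with hden
  have hdre : den.re = t + (1 - t) * (δ * c) := by
    simp [hden, Complex.sub_re, Complex.mul_re, hzre, hzim]
    try ring
  have hdim : den.im = (1 - t) * (δ * s) := by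
    simp [hden, Complex.sub_im, Complex.mul_im, hzre, hzim]
    try ring
  have hx01 : (0:ℝ) ≤ 1 - t := by linarith
  have hN : Complex.normSq den = den.re ^ 2 + den.im ^ 2 := by
    rw [Complex.normSq_apply]; ring
  have hNt : t ^ 2 ≤ Complex.normSq den := by
    rw [hN, hdre, hdim]
    nlinarith [mul_nonneg hx01 (mul_nonneg hδ0.le hc.le)]
  have hquarter : (1:ℝ) / 4 * (δ * s) ^ 2 ≤ ((1 - t) * (δ * s)) ^ 2 := by
    have h14 : (1:ℝ) / 4 ≤ (1 - t) ^ 2 := by nlinarith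
    calc (1:ℝ) / 4 * (δ * s) ^ 2 ≤ (1 - t) ^ 2 * (δ * s) ^ 2 :=
          mul_le_mul_of_nonneg_right h14 (sq_nonneg _)
      _ = ((1 - t) * (δ * s)) ^ 2 := by ring
  have hNs : (δ * |s| / 2) ^ 2 ≤ Complex.normSq den := by
    rw [hN, hdim]
    have h1 : (δ * |s| / 2) ^ 2 = 1 / 4 * (δ * s) ^ 2 := by
      rw [div_pow, mul_pow, _root_.sq_abs]; ring
    rw [h1]
    nlinarith [sq_nonneg den.re]
  have hN0 : 0 < Complex.normSq den := lt_of_lt_of_le (by positivity) hNt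
  have hden_ne : den ≠ 0 := by
    intro h
    rw [h, Complex.normSq_zero] at hN0
    exact lt_irrefl _ hN0
  have hlbden : δ * |s| / 2 ≤ ‖den‖ := by
    rw [Complex.norm_def]
    have h2 : (0:ℝ) ≤ δ * |s| / 2 := by positivity
    have h3 := Real.sqrt_le_sqrt hNs
    rwa [Real.sqrt_sq h2] at h3
  set num : ℂ := ((1 - t : ℝ) : ℂ) - z with hnum
  have hkey : Complex.normSq num =
      Complex.normSq den - (1 - (1 - t) ^ 2) * (1 - Complex.normSq z) := by
    simp only [hnum, hden, Complex.normSq_apply, Complex.sub_re, Complex.sub_im,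
      Complex.mul_re, Complex.mul_im, Complex.one_re, Complex.one_im,
      Complex.ofReal_re, Complex.ofReal_im]
    ring
  set A := ‖num / den‖ with hA
  have hA0 : 0 ≤ A := norm_nonneg _
  set v : ℝ := (1 - (1 - t) ^ 2) * (1 - Complex.normSq z) / Complex.normSq den with hv
  have hA2 : A ^ 2 = 1 - v := by
    rw [hA, norm_div, div_pow, Complex.sq_norm, Complex.sq_norm, hkey, hv]
    field_simp
  have hfaceq : 1 - (1 - t) ^ 2 = t * (2 - t) := by ring
  have hfac0 : (0:ℝ) ≤ 1 - (1 - t) ^ 2 := by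
    rw [hfaceq]; exact mul_nonneg ht0.le (by linarith)
  have hfac2 : 1 - (1 - t) ^ 2 ≤ 2 * t := by
    rw [hfaceq]
    calc t * (2 - t) ≤ t * 2 := mul_le_mul_of_nonneg_left (by linarith) ht0.le
      _ = 2 * t := by ring
  have hnum_nonneg : 0 ≤ (1 - (1 - t) ^ 2) * (1 - Complex.normSq z) :=
    mul_nonneg hfac0 h1mz_pos.le
  have hnum_le : (1 - (1 - t) ^ 2) * (1 - Complex.normSq z) ≤ 4 * t * δ := by
    calc (1 - (1 - t) ^ 2) * (1 - Complex.normSq z) ≤ (2 * t) * (2 * δ) :=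
          mul_le_mul hfac2 h1mz_le h1mz_pos.le (by linarith)
      _ = 4 * t * δ := by ring
  have hv0 : 0 ≤ v := by rw [hv]; positivity
  clear_value A v
  have hA21 : A ^ 2 ≤ 1 := by rw [hA2]; linarith
  have hA1 : A ≤ 1 := (sq_le_one_iff₀ hA0).mp hA21
  have hAv : 1 - v ≤ A := by
    calc 1 - v = A ^ 2 := hA2.symm
      _ = A * A := sq A
      _ ≤ 1 * A := mul_le_mul_of_nonneg_right hA1 hA0
      _ = A := one_mul A
  have hB1 : 1 - 4 * (δ / t) ≤ A := by
    have hk : (0:ℝ) ≤ 4 * (δ / t) := by positivity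
    have he : 4 * (δ / t) * t ^ 2 = 4 * t * δ := by field_simp
    have h4 : (1 - (1 - t) ^ 2) * (1 - Complex.normSq z) ≤
        4 * (δ / t) * Complex.normSq den := by
      calc (1 - (1 - t) ^ 2) * (1 - Complex.normSq z) ≤ 4 * t * δ := hnum_le
        _ = 4 * (δ / t) * t ^ 2 := by field_simp
        _ ≤ 4 * (δ / t) * Complex.normSq den := mul_le_mul_of_nonneg_left hNt hk
    have hv1 : v ≤ 4 * (δ / t) := by
      rw [hv, div_le_iff₀ hN0]
      exact h4
    linarith
  have hB2 : 1 - 16 * (t / δ) / s ^ 2 ≤ A := by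
    have hs2 : 0 < s ^ 2 := by positivity
    have hk : (0:ℝ) ≤ 16 * (t / δ) / s ^ 2 := by positivity
    have he : 16 * (t / δ) / s ^ 2 * (δ * |s| / 2) ^ 2 = 4 * t * δ := by
      rw [div_pow, mul_pow, _root_.sq_abs]
      field_simp
      ring
    have h4 : (1 - (1 - t) ^ 2) * (1 - Complex.normSq z) ≤
        16 * (t / δ) / s ^ 2 * Complex.normSq den := by
      calc (1 - (1 - t) ^ 2) * (1 - Complex.normSq z) ≤ 4 * t * δ := hnum_le
        _ = 16 * (t / δ) / s ^ 2 * (δ * |s| / 2) ^ 2 := he.symm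
        _ ≤ 16 * (t / δ) / s ^ 2 * Complex.normSq den := mul_le_mul_of_nonneg_left hNs hk
    have hv1 : v ≤ 16 * (t / δ) / s ^ 2 := by
      rw [hv, div_le_iff₀ hN0]
      exact h4
    linarith
  exact ⟨hden_ne, hlbden, hA1, hB1, hB2⟩

lemma special (θ δ : ℝ) (hc : 0 ≤ Real.cos θ) (hδ0 : 0 < δ) (hδ1 : δ ≤ 1) :
    ‖Complex.exp (Complex.I * θ) - 1‖ / 2 ≤
    ‖(((1 - δ : ℝ) : ℂ) - (1 - (δ : ℂ) * Complex.exp (Complex.I * θ))) /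
      (1 - ((1 - δ : ℝ) : ℂ) * (1 - (δ : ℂ) * Complex.exp (Complex.I * θ)))‖ := by
  set E := Complex.exp (Complex.I * θ) with hEdef
  have hnum : (((1 - δ : ℝ) : ℂ) - (1 - (δ : ℂ) * E)) = (δ : ℂ) * (E - 1) := by
    push_cast; ring
  have hden : (1 - ((1 - δ : ℝ) : ℂ) * (1 - (δ : ℂ) * E)) =
      (δ : ℂ) * (1 + (1 - (δ : ℂ)) * E) := by
    push_cast; ring
  rw [hnum, hden, norm_div, norm_mul, norm_mul]
  have habsδ : ‖((δ : ℝ) : ℂ)‖ = δ := by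
    rw [Complex.norm_real, Real.norm_eq_abs, abs_of_pos hδ0]
  rw [habsδ]
  have hEre : E.re = Real.cos θ := by rw [hEdef, exp_I_theta θ]; simp [Complex.cos_ofReal_re]
  have hre : (1 + (1 - (δ : ℂ)) * E).re = 1 + (1 - δ) * Real.cos θ := by
    simp [Complex.add_re, Complex.mul_re, Complex.sub_re, Complex.sub_im, hEre]
  have hrepos : (1:ℝ) ≤ (1 + (1 - (δ : ℂ)) * E).re := by
    rw [hre]
    nlinarith
  have hd0 : 0 < ‖1 + (1 - (δ : ℂ)) * E‖ := by
    have h1 := Complex.abs_re_le_norm (1 + (1 - (δ : ℂ)) * E)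
    have : (1:ℝ) ≤ |(1 + (1 - (δ : ℂ)) * E).re| := le_trans hrepos (le_abs_self _)
    linarith
  have hd2 : ‖1 + (1 - (δ : ℂ)) * E‖ ≤ 2 := by
    have hE1 : ‖E‖ = 1 := by
      rw [hEdef, mul_comm]; exact Complex.norm_exp_ofReal_mul_I θ
    calc ‖1 + (1 - (δ : ℂ)) * E‖ ≤
          ‖(1:ℂ)‖ + ‖(1 - (δ : ℂ)) * E‖ := norm_add_le _ _
      _ = 1 + ‖1 - (δ : ℂ)‖ := by rw [norm_one, norm_mul, hE1, mul_one]
      _ ≤ 2 := by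
          have h5 : ‖1 - (δ : ℂ)‖ ≤ 1 := by
            have h6 : (1 : ℂ) - (δ : ℂ) = ((1 - δ : ℝ) : ℂ) := by push_cast; ring
            rw [h6, Complex.norm_real, Real.norm_eq_abs]
            rw [_root_.abs_of_nonneg (by linarith : (0:ℝ) ≤ 1 - δ)]
            linarith
          linarith
  rw [mul_div_mul_left _ _ hδ0.ne']
  exact div_le_div_of_nonneg_left (norm_nonneg _) hd0 hd2

set_option maxHeartbeats 2000000 in
lemma prod_bound (θ : ℝ) (hc : 0 < Real.cos θ) (hs : Real.sin θ ≠ 0)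
    (m : ℕ) (hm3 : 3 ≤ m) (hδc : 1 / (m.factorial : ℝ) ≤ Real.cos θ)
    (hmC : 8 * (16 / Real.sin θ ^ 2) ≤ (m : ℝ)) :
    ‖Complex.exp (Complex.I * θ) - 1‖ / 4 ≤
      ‖∏' n : ℕ,
        ((((1 - 1 / (Nat.factorial (n + 2) : ℝ)) : ℂ) -
            (1 - (1 / (Nat.factorial m : ℂ)) * Complex.exp (Complex.I * θ))) /
          (1 - ((1 - 1 / (Nat.factorial (n + 2) : ℝ)) : ℂ) *
            (1 - (1 / (Nat.factorial m : ℂ)) * Complex.exp (Complex.I * θ))))‖ ∧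
      ‖∏' n : ℕ,
        ((((1 - 1 / (Nat.factorial (n + 2) : ℝ)) : ℂ) -
            (1 - (1 / (Nat.factorial m : ℂ)) * Complex.exp (Complex.I * θ))) /
          (1 - ((1 - 1 / (Nat.factorial (n + 2) : ℝ)) : ℂ) *
            (1 - (1 / (Nat.factorial m : ℂ)) * Complex.exp (Complex.I * θ))))‖ ≤ 1 := by
  classical
  have hfmpos : (0:ℝ) < m.factorial := by exact_mod_cast m.factorial_pos
  set δ : ℝ := 1 / (m.factorial : ℝ) with hδdef
  have hδ0 : 0 < δ := by rw [hδdef]; positivity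
  have hδ1 : δ ≤ 1 := by
    rw [hδdef, div_le_one hfmpos]
    exact_mod_cast m.factorial_pos
  have hzc : (1 : ℂ) - (1 / (Nat.factorial m : ℂ)) * Complex.exp (Complex.I * θ) =
      1 - ((δ : ℝ) : ℂ) * Complex.exp (Complex.I * θ) := by
    rw [hδdef]; push_cast; ring
  rw [hzc]
  have hcast : ∀ n : ℕ, ((1 : ℂ) - 1 / ((Nat.factorial (n + 2) : ℝ) : ℂ)) =
      (((1 - 1 / (Nat.factorial (n + 2) : ℝ) : ℝ)) : ℂ) := by
    intro n; push_cast; ring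
  simp only [hcast]
  set f : ℕ → ℂ := fun n =>
    ((((1 - 1 / (Nat.factorial (n + 2) : ℝ) : ℝ)) : ℂ) -
        (1 - ((δ : ℝ) : ℂ) * Complex.exp (Complex.I * θ))) /
      (1 - (((1 - 1 / (Nat.factorial (n + 2) : ℝ) : ℝ)) : ℂ) *
        (1 - ((δ : ℝ) : ℂ) * Complex.exp (Complex.I * θ))) with hf
  have hfc : ∀ n : ℕ, f n =
    ((((1 - 1 / (Nat.factorial (n + 2) : ℝ) : ℝ)) : ℂ) -
        (1 - ((δ : ℝ) : ℂ) * Complex.exp (Complex.I * θ))) /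
      (1 - (((1 - 1 / (Nat.factorial (n + 2) : ℝ) : ℝ)) : ℂ) *
        (1 - ((δ : ℝ) : ℂ) * Complex.exp (Complex.I * θ))) := fun n => by simp only [hf]
  -- per-n data
  have ht0 : ∀ n : ℕ, (0:ℝ) < 1 / (Nat.factorial (n + 2) : ℝ) := by
    intro n
    have : (0:ℝ) < (Nat.factorial (n + 2) : ℝ) := by exact_mod_cast (n + 2).factorial_pos
    positivity
  have ht1 : ∀ n : ℕ, (1:ℝ) / (Nat.factorial (n + 2) : ℝ) ≤ 1 / 2 := by
    intro n
    have h2 : (2:ℝ) ≤ (Nat.factorial (n + 2) : ℝ) := by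
      have : (2:ℕ) ≤ (n + 2).factorial := by
        calc (2:ℕ) = Nat.factorial 2 := rfl
          _ ≤ (n + 2).factorial := Nat.factorial_le (by omega)
      exact_mod_cast this
    exact one_div_le_one_div_of_le (by norm_num) h2
  have hcoren := fun n : ℕ => core θ (1 / (Nat.factorial (n + 2) : ℝ)) δ hc hs hδ0 hδc
    (ht0 n) (ht1 n)
  have hzim : ((1 : ℂ) - ((δ : ℝ) : ℂ) * Complex.exp (Complex.I * θ)).im =
      -(δ * Real.sin θ) := by
    rw [exp_I_theta θ]
    simp [Complex.sub_im, Complex.mul_im, Complex.sin_ofReal_re, Complex.cos_ofReal_re]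
  have hfne : ∀ n, f n ≠ 0 := by
    intro n
    rw [hfc n]
    apply div_ne_zero
    · intro h
      have h2 : ((((1 - 1 / (Nat.factorial (n + 2) : ℝ) : ℝ)) : ℂ) -
          (1 - ((δ : ℝ) : ℂ) * Complex.exp (Complex.I * θ))).im = 0 := by rw [h]; simp
      rw [Complex.sub_im, Complex.ofReal_im, hzim] at h2
      have h3 : δ * Real.sin θ = 0 := by linarith
      rcases mul_eq_zero.mp h3 with h4 | h4
      · exact hδ0.ne' h4
      · exact hs h4
    · exact (hcoren n).1
  -- summability of logs
  have hTsum : Summable (fun n : ℕ => 1 / (Nat.factorial (n + 2) : ℝ)) := by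
    have h0 : Summable (fun n : ℕ => 1 / (Nat.factorial n : ℝ)) := by
      simpa using Real.summable_pow_div_factorial 1
    exact (summable_nat_add_iff 2).mpr h0
  have htend : Tendsto (fun n : ℕ => 1 / (Nat.factorial (n + 2) : ℝ)) atTop (𝓝 0) :=
    hTsum.tendsto_atTop_zero
  have hE1 : ‖Complex.exp (Complex.I * θ)‖ = 1 := by
    rw [mul_comm]; exact Complex.norm_exp_ofReal_mul_I θ
  have habsZ1 : ‖1 + ((1 : ℂ) - ((δ : ℝ) : ℂ) * Complex.exp (Complex.I * θ))‖ ≤ 3 := by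
    have h1 : (1:ℂ) + (1 - ((δ : ℝ) : ℂ) * Complex.exp (Complex.I * θ)) =
        2 + ((-δ : ℝ) : ℂ) * Complex.exp (Complex.I * θ) := by push_cast; ring
    rw [h1]
    calc ‖2 + ((-δ : ℝ) : ℂ) * Complex.exp (Complex.I * θ)‖ ≤
        ‖(2:ℂ)‖ + ‖((-δ : ℝ) : ℂ) * Complex.exp (Complex.I * θ)‖ :=
          norm_add_le _ _
      _ = 2 + δ := by
          rw [norm_mul, hE1, mul_one, Complex.norm_real, Real.norm_eq_abs,
            _root_.abs_of_nonpos (by linarith : -δ ≤ 0), Complex.norm_two]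
          ring
      _ ≤ 3 := by linarith
  have hsabs : 0 < δ * |Real.sin θ| := by
    have : 0 < |Real.sin θ| := abs_pos.mpr hs
    positivity
  have hfm1 : ∀ n, ‖f n - 1‖ ≤ 6 * (1 / (Nat.factorial (n + 2) : ℝ)) / (δ * |Real.sin θ|) := by
    intro n
    have hdne := (hcoren n).1
    have heq : f n - 1 = (((-(1 / (Nat.factorial (n + 2) : ℝ)) : ℝ) : ℂ) *
        (1 + ((1 : ℂ) - ((δ : ℝ) : ℂ) * Complex.exp (Complex.I * θ)))) /
        (1 - (((1 - 1 / (Nat.factorial (n + 2) : ℝ) : ℝ)) : ℂ) *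
          (1 - ((δ : ℝ) : ℂ) * Complex.exp (Complex.I * θ))) := by
      rw [hfc n, div_sub_one hdne]
      congr 1
      push_cast
      ring
    have hnorm : ‖f n - 1‖ = (1 / (Nat.factorial (n + 2) : ℝ)) *
        ‖1 + ((1 : ℂ) - ((δ : ℝ) : ℂ) * Complex.exp (Complex.I * θ))‖ /
        ‖1 - (((1 - 1 / (Nat.factorial (n + 2) : ℝ) : ℝ)) : ℂ) *
          (1 - ((δ : ℝ) : ℂ) * Complex.exp (Complex.I * θ))‖ := by
      rw [heq, norm_div, norm_mul, Complex.norm_real, Real.norm_eq_abs,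
        _root_.abs_of_nonpos (by linarith [ht0 n]), neg_neg]
    rw [hnorm]
    have hdlb := (hcoren n).2.1
    have hdpos : 0 < ‖1 - (((1 - 1 / (Nat.factorial (n + 2) : ℝ) : ℝ)) : ℂ) *
        (1 - ((δ : ℝ) : ℂ) * Complex.exp (Complex.I * θ))‖ := by
      linarith [hdlb, hsabs]
    rw [div_le_div_iff₀ hdpos hsabs]
    calc (1 / (Nat.factorial (n + 2) : ℝ)) *
          ‖1 + ((1 : ℂ) - ((δ : ℝ) : ℂ) * Complex.exp (Complex.I * θ))‖ *
          (δ * |Real.sin θ|)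
        ≤ (1 / (Nat.factorial (n + 2) : ℝ)) * 3 * (δ * |Real.sin θ|) := by
          exact mul_le_mul_of_nonneg_right
            (mul_le_mul_of_nonneg_left habsZ1 (ht0 n).le) hsabs.le
      _ = 6 * (1 / (Nat.factorial (n + 2) : ℝ)) * (δ * |Real.sin θ| / 2) := by ring
      _ ≤ 6 * (1 / (Nat.factorial (n + 2) : ℝ)) *
            ‖1 - (((1 - 1 / (Nat.factorial (n + 2) : ℝ) : ℝ)) : ℂ) *
              (1 - ((δ : ℝ) : ℂ) * Complex.exp (Complex.I * θ))‖ := by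
          apply mul_le_mul_of_nonneg_left hdlb
          positivity
  have hlogev : ∀ᶠ n in atTop, ‖Complex.log (f n)‖ ≤
      (3 / 2) * (6 / (δ * |Real.sin θ|)) * (1 / (Nat.factorial (n + 2) : ℝ)) := by
    have hev : ∀ᶠ n in atTop, (1 : ℝ) / (Nat.factorial (n + 2) : ℝ) ≤
        δ * |Real.sin θ| / 12 := htend.eventually (eventually_le_nhds (by positivity))
    filter_upwards [hev] with n hn
    have hsmall : ‖f n - 1‖ ≤ 1 / 2 := by
      have h1 := hfm1 n
      have h2 : 6 * (1 / (Nat.factorial (n + 2) : ℝ)) / (δ * |Real.sin θ|) ≤ 1 / 2 := by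
        rw [div_le_iff₀ hsabs]
        linarith
      linarith
    have h3 : Complex.log (f n) = Complex.log (1 + (f n - 1)) := by ring_nf
    rw [h3]
    calc ‖Complex.log (1 + (f n - 1))‖ ≤ (3 / 2) * ‖f n - 1‖ :=
          Complex.norm_log_one_add_half_le_self hsmall
      _ ≤ (3 / 2) * (6 * (1 / (Nat.factorial (n + 2) : ℝ)) / (δ * |Real.sin θ|)) := by
          linarith [hfm1 n]
      _ = (3 / 2) * (6 / (δ * |Real.sin θ|)) * (1 / (Nat.factorial (n + 2) : ℝ)) := by
          ring
  have hlogsum : Summable (fun n => Complex.log (f n)) :=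
    Summable.of_norm_bounded_eventually_nat (hTsum.mul_left _) hlogev
  have hmult : Multipliable f := by
    exact Complex.multipliable_of_summable_log hlogsum
  have habs : HasProd (fun n => ‖f n‖) (‖∏' n, f n‖) :=
    hmult.hasProd.norm
  constructor
  · -- lower bound
    apply ge_of_tendsto habs
    filter_upwards [Filter.eventually_ge_atTop ({m - 2} : Finset ℕ)] with F hF
    have hmem : m - 2 ∈ F := hF (Finset.mem_singleton_self _)
    rw [← Finset.mul_prod_erase F _ hmem]
    have hm2 : m - 2 + 2 = m := by omega
    have hspec : ‖Complex.exp (Complex.I * θ) - 1‖ / 2 ≤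
        ‖f (m - 2)‖ := by
      have h1 : (1 : ℝ) - 1 / (Nat.factorial (m - 2 + 2) : ℝ) = 1 - δ := by
        rw [hm2, hδdef]
      rw [hfc (m - 2)]
      simp only [h1]
      exact special θ δ hc.le hδ0 hδ1
    set C : ℝ := 16 / Real.sin θ ^ 2 with hC
    have hs2 : 0 < Real.sin θ ^ 2 := by positivity
    have hC0 : 0 < C := by rw [hC]; positivity
    have hm0 : (0:ℝ) < m := by exact_mod_cast (by omega : 0 < m)
    have hCm : C / m ≤ 1 / 8 := by
      rw [div_le_div_iff₀ hm0 (by norm_num : (0:ℝ) < 8)]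
      linarith
    have hC4 : 4 ≤ C := by
      rw [hC, le_div_iff₀ hs2]
      nlinarith [Real.sin_sq_le_one θ]
    set v : ℕ → ℝ := fun n =>
      C / m * (1 / 2) ^ (if n + 2 < m then m - (n + 3) else n + 1 - m) with hv
    have hv0 : ∀ n, 0 ≤ v n := by
      intro n
      simp only [hv]
      positivity
    have hv18 : ∀ n, v n ≤ 1 / 8 := by
      intro n
      simp only [hv]
      calc C / m * (1 / 2 : ℝ) ^ (if n + 2 < m then m - (n + 3) else n + 1 - m)
          ≤ C / m * 1 := by
            apply mul_le_mul_of_nonneg_left _ (by positivity)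
            exact pow_le_one₀ (by norm_num) (by norm_num)
        _ = C / m := mul_one _
        _ ≤ 1 / 8 := hCm
    have hfv : ∀ n, n ≠ m - 2 → 1 - v n ≤ ‖f n‖ := by
      intro n hne
      by_cases h : n + 2 < m
      · have hB1 : 1 - 4 * (δ / (1 / (Nat.factorial (n + 2) : ℝ))) ≤
            ‖f n‖ := by
          rw [hfc n]
          exact (hcoren n).2.2.2.1
        have hδt : δ / (1 / (Nat.factorial (n + 2) : ℝ)) =
            ((n + 2).factorial : ℝ) / (m.factorial : ℝ) := by
          rw [div_div_eq_mul_div, div_one, hδdef, one_div_mul_eq_div]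
        have hr := ratio_lt (by omega : 2 ≤ n + 2) (by omega : n + 2 + 1 ≤ m)
        have hexp : m - (n + 2 + 1) = m - (n + 3) := by omega
        rw [hexp] at hr
        have h5 : 4 * (δ / (1 / (Nat.factorial (n + 2) : ℝ))) ≤ v n := by
          rw [hδt]
          simp only [hv, if_pos h]
          calc 4 * (((n + 2).factorial : ℝ) / (m.factorial : ℝ))
              ≤ 4 * ((1 / m) * (1 / 2) ^ (m - (n + 3))) := by linarith
            _ = 4 / m * (1 / 2) ^ (m - (n + 3)) := by ring
            _ ≤ C / m * (1 / 2) ^ (m - (n + 3)) := by gcongr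
        linarith
      · have hB2 : 1 - 16 * ((1 / (Nat.factorial (n + 2) : ℝ)) / δ) / Real.sin θ ^ 2 ≤
            ‖f n‖ := by
          rw [hfc n]
          exact (hcoren n).2.2.2.2
        have htδ : (1 / (Nat.factorial (n + 2) : ℝ)) / δ =
            (m.factorial : ℝ) / ((n + 2).factorial : ℝ) := by
          rw [hδdef, div_div_eq_mul_div, div_one, one_div_mul_eq_div]
        have hr := ratio_gt (by omega : 2 ≤ m) (by omega : m + 1 ≤ n + 2)
        have hexp : n + 2 - (m + 1) = n + 1 - m := by omega
        rw [hexp] at hr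
        have h5 : 16 * ((1 / (Nat.factorial (n + 2) : ℝ)) / δ) / Real.sin θ ^ 2 ≤ v n := by
          rw [htδ]
          have heq2 : 16 * ((m.factorial : ℝ) / ((n + 2).factorial : ℝ)) / Real.sin θ ^ 2 =
              C * ((m.factorial : ℝ) / ((n + 2).factorial : ℝ)) := by
            rw [hC]; ring
          rw [heq2]
          simp only [hv, if_neg h]
          calc C * ((m.factorial : ℝ) / ((n + 2).factorial : ℝ))
              ≤ C * ((1 / m) * (1 / 2) ^ (n + 1 - m)) := by
                exact mul_le_mul_of_nonneg_left hr hC0.le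
            _ = C / m * (1 / 2) ^ (n + 1 - m) := by ring
        linarith
    have herase : (1:ℝ) / 2 ≤ ∏ n ∈ F.erase (m - 2), ‖f n‖ := by
      have h1 : 1 - ∑ n ∈ F.erase (m - 2), v n ≤ ∏ n ∈ F.erase (m - 2), (1 - v n) :=
        one_sub_sum_le_prod v _ (fun n _ => hv0 n)
          (fun n _ => le_trans (hv18 n) (by norm_num))
      have h2 : ∏ n ∈ F.erase (m - 2), (1 - v n) ≤
          ∏ n ∈ F.erase (m - 2), ‖f n‖ :=
        Finset.prod_le_prod (fun n _ => by linarith [hv18 n])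
          (fun n hn => hfv n (Finset.mem_erase.mp hn).1)
      have h3 : ∑ n ∈ F.erase (m - 2), v n ≤ 4 * (C / m) :=
        sum_bound m hm3 (C / m) (by positivity) v
          (fun n _ => by simp only [hv]; exact le_rfl) (fun n => hv0 n) _ (Finset.notMem_erase _ _)
      linarith
    calc ‖Complex.exp (Complex.I * θ) - 1‖ / 4
        = (‖Complex.exp (Complex.I * θ) - 1‖ / 2) * (1 / 2) := by ring
      _ ≤ ‖f (m - 2)‖ * ∏ n ∈ F.erase (m - 2), ‖f n‖ :=
          mul_le_mul hspec herase (by norm_num) (norm_nonneg _)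
  · -- upper bound
    apply le_of_tendsto habs
    apply Eventually.of_forall
    intro F
    apply Finset.prod_le_one
    · intro n _
      exact norm_nonneg _
    · intro n _
      rw [hfc n]
      exact (hcoren n).2.2.1

/-- For `a ∈ 𝔻 \ ℝ` and `0 < |θ₁| < π/2`,
`liminf_{m→∞} |B(1 - (1/m!) e^{iθ₁})| > 0`. -/
theorem stmt7 (a : ℂ) (ha : a ∈ ball (0 : ℂ) 1)
    (haR : a ∉ Set.range ((↑) : ℝ → ℂ))
    (θ₁ : ℝ) (h1 : 0 < |θ₁|) (h2 : |θ₁| < Real.pi / 2) :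
    0 < Filter.liminf (fun m : ℕ =>
      ‖B a (1 - (1 / (Nat.factorial m : ℂ)) * Complex.exp (Complex.I * θ₁))‖)
      atTop := by
  have hpi := Real.pi_pos
  have habs := abs_lt.mp h2
  have hc : 0 < Real.cos θ₁ := Real.cos_pos_of_mem_Ioo ⟨habs.1, habs.2⟩
  have hθ0 : θ₁ ≠ 0 := by
    intro h
    rw [h] at h1
    simp at h1
  have hs : Real.sin θ₁ ≠ 0 := by
    intro h
    exact hθ0 ((Real.sin_eq_zero_iff_of_lt_of_lt (by linarith) (by linarith)).mp h)
  have hE1ne : Complex.exp (Complex.I * θ₁) - 1 ≠ 0 := by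
    intro h
    apply hs
    have h3 := congrArg Complex.im (sub_eq_zero.mp h)
    rw [exp_I_theta θ₁] at h3
    simpa [Complex.sin_ofReal_re] using h3
  have hKpos : 0 < ‖Complex.exp (Complex.I * θ₁) - 1‖ := norm_pos_iff.mpr hE1ne
  -- the Möbius factor
  have ha1 : a ≠ 1 := by
    intro h
    exact haR ⟨1, by rw [h]; exact Complex.ofReal_one⟩
  have hd1 : (1 : ℂ) - (starRingEnd ℂ) a * 1 ≠ 0 := by
    rw [mul_one]
    intro h
    apply ha1
    have h3 : (starRingEnd ℂ) a = 1 := by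
      have := sub_eq_zero.mp h
      exact this.symm
    have h4 := congrArg (starRingEnd ℂ) h3
    simpa using h4
  set Mob : ℂ → ℝ := fun w => ‖(a - w) / (1 - (starRingEnd ℂ) a * w)‖ with hMob
  have hMcont : ContinuousAt Mob 1 := by
    apply continuous_norm.continuousAt.comp
    exact ContinuousAt.div
      ((continuous_const.sub continuous_id).continuousAt)
      ((continuous_const.sub (continuous_const.mul continuous_id)).continuousAt)
      (by simpa using hd1)
  have hM1 : Mob 1 = 1 := by
    rw [hMob]
    simp only [mul_one]
    have h3 : (1 : ℂ) - (starRingEnd ℂ) a = (starRingEnd ℂ) (1 - a) := by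
      rw [map_sub, map_one]
    rw [norm_div, h3, Complex.norm_conj]
    rw [norm_sub_rev 1 a]
    exact div_self (norm_ne_zero_iff.mpr (sub_ne_zero.mpr ha1))
  have hfr : Tendsto (fun m : ℕ => 1 / (m.factorial : ℝ)) atTop (𝓝 0) := by
    have h0 : Summable (fun n : ℕ => 1 / (Nat.factorial n : ℝ)) := by
      simpa using Real.summable_pow_div_factorial 1
    exact h0.tendsto_atTop_zero
  have hfcx : Tendsto (fun m : ℕ => 1 / (m.factorial : ℂ)) atTop (𝓝 0) := by
    have h4 : Tendsto (fun m : ℕ => ((1 / (m.factorial : ℝ) : ℝ) : ℂ)) atTop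
        (𝓝 ((0 : ℝ) : ℂ)) := Tendsto.comp (Complex.continuous_ofReal.tendsto 0) hfr
    have h5 : (fun m : ℕ => ((1 / (m.factorial : ℝ) : ℝ) : ℂ)) =
        fun m : ℕ => 1 / (m.factorial : ℂ) := by
      funext m
      push_cast
      ring
    rw [h5] at h4
    simpa using h4
  have hz_t : Tendsto (fun m : ℕ =>
      1 - (1 / (Nat.factorial m : ℂ)) * Complex.exp (Complex.I * θ₁)) atTop (𝓝 1) := by
    have h4 := (hfcx.mul_const (Complex.exp (Complex.I * θ₁))).const_sub 1
    simpa using h4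
  have hMt : Tendsto (fun m : ℕ => Mob (1 - (1 / (Nat.factorial m : ℂ)) *
      Complex.exp (Complex.I * θ₁))) atTop (𝓝 1) := by
    have h4 := hMcont.tendsto.comp hz_t
    rwa [hM1] at h4
  have ev_half : ∀ᶠ m : ℕ in atTop, (1:ℝ) / 2 ≤ Mob (1 - (1 / (Nat.factorial m : ℂ)) *
      Complex.exp (Complex.I * θ₁)) :=
    hMt.eventually (eventually_ge_nhds (by norm_num : (1:ℝ) / 2 < 1))
  have ev_two : ∀ᶠ m : ℕ in atTop, Mob (1 - (1 / (Nat.factorial m : ℂ)) *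
      Complex.exp (Complex.I * θ₁)) ≤ 2 :=
    hMt.eventually (eventually_le_nhds (by norm_num : (1:ℝ) < 2))
  have ev_cos : ∀ᶠ m : ℕ in atTop, 1 / (m.factorial : ℝ) ≤ Real.cos θ₁ :=
    hfr.eventually (eventually_le_nhds hc)
  have ev_m3 : ∀ᶠ m : ℕ in atTop, 3 ≤ m := eventually_ge_atTop 3
  have ev_mC : ∀ᶠ m : ℕ in atTop, 8 * (16 / Real.sin θ₁ ^ 2) ≤ (m : ℝ) :=
    tendsto_natCast_atTop_atTop.eventually_ge_atTop _
  have hBev : ∀ᶠ m : ℕ in atTop,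
      ‖Complex.exp (Complex.I * θ₁) - 1‖ / 4 * (1 / 2) ≤
        ‖B a (1 - (1 / (Nat.factorial m : ℂ)) * Complex.exp (Complex.I * θ₁))‖ ∧
      ‖B a (1 - (1 / (Nat.factorial m : ℂ)) * Complex.exp (Complex.I * θ₁))‖ ≤ 2 := by
    filter_upwards [ev_half, ev_two, ev_cos, ev_m3, ev_mC] with m hhalf htwo hcos hm3 hmc
    have hpb := prod_bound θ₁ hc hs m hm3 hcos hmc
    have hBval : ‖B a (1 - (1 / (Nat.factorial m : ℂ)) *
        Complex.exp (Complex.I * θ₁))‖ =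
        Mob (1 - (1 / (Nat.factorial m : ℂ)) * Complex.exp (Complex.I * θ₁)) *
        ‖∏' n : ℕ,
          ((((1 - 1 / (Nat.factorial (n + 2) : ℝ)) : ℂ) -
              (1 - (1 / (Nat.factorial m : ℂ)) * Complex.exp (Complex.I * θ₁))) /
            (1 - ((1 - 1 / (Nat.factorial (n + 2) : ℝ)) : ℂ) *
              (1 - (1 / (Nat.factorial m : ℂ)) * Complex.exp (Complex.I * θ₁))))‖ := by
      rw [B, norm_mul, hMob]
    rw [hBval]
    constructor
    · calc ‖Complex.exp (Complex.I * θ₁) - 1‖ / 4 * (1 / 2)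
          = (1 / 2) * (‖Complex.exp (Complex.I * θ₁) - 1‖ / 4) := by ring
        _ ≤ _ := mul_le_mul hhalf hpb.1 (by positivity) (norm_nonneg _)
    · calc Mob (1 - (1 / (Nat.factorial m : ℂ)) * Complex.exp (Complex.I * θ₁)) *
          ‖∏' n : ℕ,
            ((((1 - 1 / (Nat.factorial (n + 2) : ℝ)) : ℂ) -
                (1 - (1 / (Nat.factorial m : ℂ)) * Complex.exp (Complex.I * θ₁))) /
              (1 - ((1 - 1 / (Nat.factorial (n + 2) : ℝ)) : ℂ) *
                (1 - (1 / (Nat.factorial m : ℂ)) * Complex.exp (Complex.I * θ₁))))‖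
          ≤ 2 * 1 := mul_le_mul htwo hpb.2 (norm_nonneg _) (by norm_num)
        _ = 2 := by norm_num
  have hub : IsBoundedUnder (· ≤ ·) atTop (fun m : ℕ =>
      ‖B a (1 - (1 / (Nat.factorial m : ℂ)) * Complex.exp (Complex.I * θ₁))‖) :=
    isBoundedUnder_of_eventually_le (hBev.mono fun m h => h.2)
  have hcb := hub.isCoboundedUnder_ge
  have hlb := le_liminf_of_le hcb (hBev.mono fun m h => h.1)
  have hpos : 0 < ‖Complex.exp (Complex.I * θ₁) - 1‖ / 4 * (1 / 2) := by
    positivity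
  exact lt_of_lt_of_le hpos hlb
end

section
/- Let {ε_n}_{n≥1} be a strictly decreasing sequence in (0,1) with ε_n → 0, and suppose {1 - ε_n} is a thin Blaschke sequence, i.e. lim_{m→∞} ∏_{n : n ≠ m} d(1 - ε_n, 1 - ε_m) = 1. Then for every real θ₁ with 0 < |θ₁| < π/2, also lim_{m→∞} ∏_{n : n ≠ m} d(1 - ε_n, 1 - ε_m·e^{iθ₁}) = 1 (the points 1 - ε_m e^{iθ₁} lie in 𝔻 for all sufficiently large m, and the products are taken over those m). -/
open Complex Filter Metric

lemma normSq_num (a b θ : ℝ) :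
    Complex.normSq ((1 - (a:ℂ)) - (1 - (b:ℂ) * Complex.exp (Complex.I * θ))) =
      a^2 + b^2 - 2*a*b*Real.cos θ := by
  rw [mul_comm Complex.I (θ:ℂ), Complex.exp_mul_I, ← Complex.ofReal_cos, ← Complex.ofReal_sin]
  simp only [Complex.normSq_apply, Complex.sub_re, Complex.sub_im, Complex.one_re, Complex.one_im,
    Complex.add_re, Complex.add_im, Complex.mul_re, Complex.mul_im, Complex.ofReal_re,
    Complex.ofReal_im, Complex.I_re, Complex.I_im, Complex.cos_ofReal_re, Complex.cos_ofReal_im,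
    Complex.sin_ofReal_re, Complex.sin_ofReal_im]
  linear_combination (b^2) * Real.sin_sq_add_cos_sq θ

lemma normSq_den (a b θ : ℝ) :
    Complex.normSq (1 - (starRingEnd ℂ) (1 - (a:ℂ)) * (1 - (b:ℂ) * Complex.exp (Complex.I * θ))) =
      a^2 + (1-a)^2*b^2 + 2*a*(1-a)*b*Real.cos θ := by
  rw [mul_comm Complex.I (θ:ℂ), Complex.exp_mul_I, ← Complex.ofReal_cos, ← Complex.ofReal_sin]
  simp only [map_sub, map_one, Complex.conj_ofReal, Complex.normSq_apply, Complex.sub_re,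
    Complex.sub_im, Complex.one_re, Complex.one_im, Complex.add_re, Complex.add_im, Complex.mul_re,
    Complex.mul_im, Complex.ofReal_re, Complex.ofReal_im, Complex.I_re, Complex.I_im,
    Complex.cos_ofReal_re, Complex.cos_ofReal_im, Complex.sin_ofReal_re, Complex.sin_ofReal_im]
  linear_combination ((1-a)^2*b^2) * Real.sin_sq_add_cos_sq θ

lemma pd_ratio (a b θ : ℝ) :
    pd (1 - a) (1 - b * Complex.exp (Complex.I * θ)) =
      Real.sqrt (a^2+b^2-2*a*b*Real.cos θ) /
        Real.sqrt (a^2+(1-a)^2*b^2+2*a*(1-a)*b*Real.cos θ) := by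
  rw [pd, Complex.norm_def, Complex.norm_def, normSq_num, normSq_den]

lemma pd_real (a b : ℝ) :
    pd (1 - a) (1 - b) =
      Real.sqrt (a^2+b^2-2*a*b) / Real.sqrt (a^2+(1-a)^2*b^2+2*a*(1-a)*b) := by
  have : (1 : ℂ) - b = 1 - b * Complex.exp (Complex.I * (0:ℝ)) := by simp
  rw [this, pd_ratio]
  simp [Real.cos_zero]

lemma pd_mono (a b θ : ℝ) (ha0 : 0 < a) (ha1 : a < 1) (hb0 : 0 < b)
    (hc : 0 ≤ Real.cos θ) :
    pd (1 - a) (1 - b) ≤ pd (1 - a) (1 - b * Complex.exp (Complex.I * θ)) := by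
  rw [pd_real, pd_ratio]
  set c := Real.cos θ with hcdef
  have hc1 : c ≤ 1 := Real.cos_le_one θ
  have h1a : (0:ℝ) ≤ 1 - a := by linarith
  have ht1 : (0:ℝ) ≤ 2*a*(1-a)*b := by positivity
  have hD1 : (0:ℝ) < a^2+(1-a)^2*b^2+2*a*(1-a)*b := by nlinarith [sq_nonneg ((1-a)*b), pow_pos ha0 2]
  have hD2 : (0:ℝ) < a^2+(1-a)^2*b^2+2*a*(1-a)*b*c := by nlinarith [sq_nonneg ((1-a)*b), pow_pos ha0 2, mul_nonneg ht1 hc]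
  have hN1 : (0:ℝ) ≤ a^2+b^2-2*a*b := by nlinarith [sq_nonneg (a-b)]
  have hN2 : (0:ℝ) ≤ a^2+b^2-2*a*b*c := by nlinarith [sq_nonneg (a-b)]
  rw [div_le_div_iff₀ (Real.sqrt_pos.2 hD1) (Real.sqrt_pos.2 hD2),
    ← Real.sqrt_mul hN1, ← Real.sqrt_mul hN2]
  apply Real.sqrt_le_sqrt
  have key : (a^2+b^2-2*a*b*c) * (a^2+(1-a)^2*b^2+2*a*(1-a)*b)
      - (a^2+b^2-2*a*b) * (a^2+(1-a)^2*b^2+2*a*(1-a)*b*c)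
      = 2*a*b*(1-c)*((1-a)*(a^2+b^2) + a^2 + (1-a)^2*b^2) := by ring
  nlinarith [mul_nonneg (mul_nonneg (mul_nonneg (by linarith : (0:ℝ) ≤ 2*a) hb0.le)
    (by linarith : (0:ℝ) ≤ 1 - c))
    (by nlinarith : (0:ℝ) ≤ (1-a)*(a^2+b^2) + a^2 + (1-a)^2*b^2)]

lemma pd_le_one' (a b θ : ℝ) (ha0 : 0 < a) (ha1 : a < 1) (hb0 : 0 < b)
    (hb2 : b ≤ 2 * Real.cos θ) :
    pd (1 - a) (1 - b * Complex.exp (Complex.I * θ)) ≤ 1 := by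
  rw [pd_ratio]
  set c := Real.cos θ with hcdef
  have hc : 0 ≤ c := by nlinarith
  have h1a : (0:ℝ) ≤ 1 - a := by linarith
  have ht1 : (0:ℝ) ≤ 2*a*(1-a)*b := by positivity
  have hD2 : (0:ℝ) < a^2+(1-a)^2*b^2+2*a*(1-a)*b*c := by nlinarith [sq_nonneg ((1-a)*b), pow_pos ha0 2, mul_nonneg ht1 hc]
  rw [div_le_one (Real.sqrt_pos.2 hD2)]
  apply Real.sqrt_le_sqrt
  nlinarith [mul_nonneg (mul_nonneg (mul_pos ha0 hb0).le (by linarith : (0:ℝ) ≤ 2-a))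
    (by linarith : (0:ℝ) ≤ 2*c - b)]

lemma pd_real_le_one (a b : ℝ) (ha0 : 0 < a) (ha1 : a < 1) (hb0 : 0 < b) (hb1 : b < 1) :
    pd (1 - a) (1 - b) ≤ 1 := by
  have : (1 : ℂ) - b = 1 - b * Complex.exp (Complex.I * (0:ℝ)) := by simp
  rw [this]
  exact pd_le_one' a b 0 ha0 ha1 hb0 (by simp [Real.cos_zero]; linarith)

lemma multipliable_of_Icc {ι : Type*} {f : ι → ℝ} (h0 : ∀ i, 0 ≤ f i) (h1 : ∀ i, f i ≤ 1) :
    Multipliable f := by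
  classical
  refine ⟨⨅ s : Finset ι, ∏ i ∈ s, f i, tendsto_atTop_ciInf ?_ ?_⟩
  · intro s t hst
    show ∏ i ∈ t, f i ≤ ∏ i ∈ s, f i
    rw [← Finset.prod_sdiff hst]
    exact mul_le_of_le_one_left (Finset.prod_nonneg fun i _ => h0 i)
      (Finset.prod_le_one (fun i _ => h0 i) (fun i _ => h1 i))
  · refine ⟨0, ?_⟩
    rintro x ⟨s, rfl⟩
    exact Finset.prod_nonneg fun i _ => h0 i

lemma my_tprod_le_tprod {ι : Type*} {f g : ι → ℝ} (h0 : ∀ i, 0 ≤ f i) (hle : ∀ i, f i ≤ g i)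
    (hf : Multipliable f) (hg : Multipliable g) : ∏' i, f i ≤ ∏' i, g i :=
  le_of_tendsto_of_tendsto' hf.hasProd hg.hasProd fun s =>
    Finset.prod_le_prod (fun i _ => h0 i) (fun i _ => hle i)

lemma my_tprod_le_one {ι : Type*} {f : ι → ℝ} (h0 : ∀ i, 0 ≤ f i) (h1 : ∀ i, f i ≤ 1)
    (hf : Multipliable f) : ∏' i, f i ≤ 1 :=
  le_of_tendsto' hf.hasProd fun s => Finset.prod_le_one (fun i _ => h0 i) (fun i _ => h1 i)

/-- If `ε_n` decreases strictly to `0` in `(0,1)` and `{1 - ε_n}` is a thin Blaschke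
sequence, then for any `θ₁` with `0 < |θ₁| < π/2` also
`lim_{m→∞} ∏_{n ≠ m} d(1 - ε_n, 1 - ε_m e^{iθ₁}) = 1`. -/
theorem stmt8 (ε : ℕ → ℝ) (hdec : StrictAnti ε) (hmem : ∀ n, ε n ∈ Set.Ioo (0 : ℝ) 1)
    (hlim : Tendsto ε atTop (nhds 0))
    (hthin : Tendsto (fun m : ℕ =>
      ∏' n : {n : ℕ // n ≠ m}, pd (1 - (ε (n : ℕ) : ℂ)) (1 - (ε m : ℂ))) atTop (nhds 1))
    (θ₁ : ℝ) (h1 : 0 < |θ₁|) (h2 : |θ₁| < Real.pi / 2) :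
    Tendsto (fun m : ℕ =>
      ∏' n : {n : ℕ // n ≠ m},
        pd (1 - (ε (n : ℕ) : ℂ)) (1 - (ε m : ℂ) * Complex.exp (Complex.I * θ₁)))
      atTop (nhds 1) := by
  have hcpos : 0 < Real.cos θ₁ := by
    apply Real.cos_pos_of_mem_Ioo
    constructor
    · have := abs_lt.1 h2
      linarith [neg_abs_le θ₁]
    · linarith [le_abs_self θ₁]
  have hev : ∀ᶠ m in atTop, ε m ≤ 2 * Real.cos θ₁ :=
    (hlim.eventually (gt_mem_nhds (by linarith : (0:ℝ) < 2 * Real.cos θ₁))).mono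
      fun m hm => hm.le
  refine tendsto_of_tendsto_of_tendsto_of_le_of_le' hthin tendsto_const_nhds ?_ ?_
  · filter_upwards [hev] with m hm
    apply my_tprod_le_tprod
    · exact fun i => pd_nonneg _ _
    · exact fun i => pd_mono (ε i) (ε m) θ₁ (hmem i).1 (hmem i).2 (hmem m).1 hcpos.le
    · exact multipliable_of_Icc (fun i => pd_nonneg _ _)
        (fun i => pd_real_le_one (ε i) (ε m) (hmem i).1 (hmem i).2 (hmem m).1 (hmem m).2)
    · exact multipliable_of_Icc (fun i => pd_nonneg _ _)
        (fun i => pd_le_one' (ε i) (ε m) θ₁ (hmem i).1 (hmem i).2 (hmem m).1 hm)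
  · filter_upwards [hev] with m hm
    exact my_tprod_le_one (fun i => pd_nonneg _ _)
      (fun i => pd_le_one' (ε i) (ε m) θ₁ (hmem i).1 (hmem i).2 (hmem m).1 hm)
      (multipliable_of_Icc (fun i => pd_nonneg _ _)
        (fun i => pd_le_one' (ε i) (ε m) θ₁ (hmem i).1 (hmem i).2 (hmem m).1 hm))
end

section
/- Let a ∈ 𝔻 lie in the open second quadrant, i.e. Re a < 0 and Im a > 0. Then the Möbius factor φ_a(t) = (a - t)/(1 - conj(a)·t) is nonzero for every t ∈ [0,1], and there exists a continuous strictly increasing function θ : [0,1] → ℝ such that φ_a(t) = |φ_a(t)|·e^{iθ(t)} for all t ∈ [0,1]. -/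
open Complex Filter Metric

lemma upper_rep (z : ℂ) (hz : 0 < z.im) :
    z = (‖z‖ : ℂ) *
      Complex.exp (Complex.I * ((Real.pi/2 - Real.arctan (z.re / z.im) : ℝ) : ℂ)) := by
  set r : ℝ := z.re / z.im with hr
  have hs : 0 < Real.sqrt (1 + r ^ 2) := Real.sqrt_pos.2 (by positivity)
  have habs : (‖z‖ : ℝ) = z.im * Real.sqrt (1 + r ^ 2) := by
    rw [Complex.norm_def, Complex.normSq_apply,
      show z.re * z.re + z.im * z.im = z.im ^ 2 * (1 + r ^ 2) by
        rw [hr]; field_simp; ring,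
      Real.sqrt_mul (sq_nonneg _), Real.sqrt_sq hz.le]
  have hexp : ∀ x : ℝ, Complex.exp (Complex.I * (x : ℂ))
      = (Real.cos x : ℂ) + (Real.sin x : ℂ) * Complex.I := by
    intro x
    rw [mul_comm, Complex.exp_mul_I, Complex.ofReal_cos, Complex.ofReal_sin]
  rw [hexp]
  apply Complex.ext
  · simp only [Complex.mul_re, Complex.add_re, Complex.ofReal_re, Complex.mul_im,
      Complex.add_im, Complex.ofReal_im, Complex.I_re, Complex.I_im]
    rw [Real.cos_pi_div_two_sub, Real.sin_pi_div_two_sub, Real.sin_arctan, Real.cos_arctan,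
      habs]
    field_simp [hr]
    simp only [zero_mul, mul_zero, add_zero, sub_zero, hr]
    field_simp
  · simp only [Complex.mul_im, Complex.add_re, Complex.add_im, Complex.ofReal_re,
      Complex.ofReal_im, Complex.mul_re, Complex.mul_im, Complex.I_re, Complex.I_im]
    rw [Real.cos_pi_div_two_sub, Real.sin_pi_div_two_sub, Real.sin_arctan, Real.cos_arctan,
      habs]
    field_simp
    simp

/-- If `a ∈ 𝔻` lies in the open second quadrant (`Re a < 0`, `Im a > 0`), then the
Möbius factor `φ_a(t) = (a - t)/(1 - conj a · t)` is nonzero on `[0,1]` and its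
argument can be chosen as a continuous strictly increasing function `θ : [0,1] → ℝ`
with `φ_a(t) = |φ_a(t)| e^{iθ(t)}`. -/
theorem stmt10 (a : ℂ) (ha : ‖a‖ < 1) (hre : a.re < 0) (him : 0 < a.im) :
    (∀ t : ℝ, t ∈ Set.Icc (0 : ℝ) 1 → (a - t) / (1 - (starRingEnd ℂ) a * t) ≠ 0) ∧
    ∃ θ : ℝ → ℝ, ContinuousOn θ (Set.Icc 0 1) ∧ StrictMonoOn θ (Set.Icc 0 1) ∧
      ∀ t : ℝ, t ∈ Set.Icc (0 : ℝ) 1 →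
        (a - t) / (1 - (starRingEnd ℂ) a * t) =
          (‖(a - t) / (1 - (starRingEnd ℂ) a * t)‖ : ℂ) *
            Complex.exp (Complex.I * θ t) := by
  set p : ℝ := a.re with hp
  set q : ℝ := a.im with hq
  have hpq : p ^ 2 + q ^ 2 < 1 := by
    have h1 : ‖a‖ ^ 2 < 1 := by nlinarith [norm_nonneg a]
    rw [Complex.sq_norm, Complex.normSq_apply] at h1
    nlinarith
  set N : ℝ → ℝ := fun t => (p - t) * (1 - p * t) + q ^ 2 * t with hN
  set D : ℝ → ℝ := fun t => q * (1 - 2 * p * t + t ^ 2) with hD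
  have hDpos : ∀ t ∈ Set.Icc (0 : ℝ) 1, 0 < D t := by
    intro t ht
    have h1 := ht.1
    have : (0:ℝ) < 1 - 2 * p * t + t ^ 2 := by nlinarith
    exact mul_pos him this
  -- denominator nonzero
  have hden : ∀ t ∈ Set.Icc (0 : ℝ) 1, (1 - (starRingEnd ℂ) a * (t : ℂ)) ≠ 0 := by
    intro t ht h
    have hre' : (1 - (starRingEnd ℂ) a * (t : ℂ)).re = 1 - p * t := by
      simp [Complex.sub_re, Complex.mul_re, hp]
    rw [h] at hre'
    simp at hre'
    nlinarith [ht.1]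
  have hnum : ∀ t : ℝ, (a - (t : ℂ)) ≠ 0 := by
    intro t h
    have : (a - (t : ℂ)).im = q := by simp [hq]
    rw [h] at this
    simp at this
    exact him.ne this
  have hne : ∀ t ∈ Set.Icc (0 : ℝ) 1,
      (a - (t:ℂ)) / (1 - (starRingEnd ℂ) a * t) ≠ 0 := fun t ht =>
    div_ne_zero (hnum t) (hden t ht)
  -- real and imaginary parts
  have hE : ∀ t ∈ Set.Icc (0 : ℝ) 1, 0 < Complex.normSq (1 - (starRingEnd ℂ) a * (t:ℂ)) :=
    fun t ht => Complex.normSq_pos.2 (hden t ht)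
  have hre_im : ∀ t : ℝ,
      ((a - (t:ℂ)) / (1 - (starRingEnd ℂ) a * t)).re
        = N t / Complex.normSq (1 - (starRingEnd ℂ) a * (t:ℂ)) ∧
      ((a - (t:ℂ)) / (1 - (starRingEnd ℂ) a * t)).im
        = D t / Complex.normSq (1 - (starRingEnd ℂ) a * (t:ℂ)) := by
    intro t
    constructor
    · rw [Complex.div_re]
      simp [Complex.sub_re, Complex.sub_im, Complex.mul_re, Complex.mul_im, hN]
      ring
    · rw [Complex.div_im]
      simp [Complex.sub_re, Complex.sub_im, Complex.mul_re, Complex.mul_im, hD]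
      ring
  have hIm : ∀ t ∈ Set.Icc (0 : ℝ) 1,
      0 < ((a - (t:ℂ)) / (1 - (starRingEnd ℂ) a * t)).im := by
    intro t ht
    rw [(hre_im t).2]
    exact div_pos (hDpos t ht) (hE t ht)
  have hratio : ∀ t ∈ Set.Icc (0 : ℝ) 1,
      ((a - (t:ℂ)) / (1 - (starRingEnd ℂ) a * t)).re /
        ((a - (t:ℂ)) / (1 - (starRingEnd ℂ) a * t)).im = N t / D t := by
    intro t ht
    have hE' : Complex.normSq (1 - (starRingEnd ℂ) a * (t:ℂ)) ≠ 0 := (hE t ht).ne'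
    have hD' : D t ≠ 0 := (hDpos t ht).ne'
    rw [(hre_im t).1, (hre_im t).2]
    field_simp
  -- strict antitonicity of N/D
  have hanti : StrictAntiOn (fun t => N t / D t) (Set.Icc (0:ℝ) 1) := by
    have hNc : Continuous N := by fun_prop
    have hDc : Continuous D := by fun_prop
    apply strictAntiOn_of_deriv_neg (convex_Icc 0 1)
    · exact (hNc.continuousOn).div hDc.continuousOn (fun t ht => (hDpos t ht).ne')
    · intro x hx
      rw [interior_Icc] at hx
      have hxI : x ∈ Set.Icc (0:ℝ) 1 := Set.mem_Icc.2 ⟨hx.1.le, hx.2.le⟩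
      have hDx : D x ≠ 0 := (hDpos x hxI).ne'
      have h1 : HasDerivAt (fun t : ℝ => p - t) (-1) x := (hasDerivAt_id x).const_sub p
      have h2 : HasDerivAt (fun t : ℝ => 1 - p * t) (-(p * 1)) x :=
        ((hasDerivAt_id x).const_mul p).const_sub 1
      have h3 := h1.mul h2
      have h4 : HasDerivAt (fun t : ℝ => q ^ 2 * t) (q ^ 2 * 1) x :=
        (hasDerivAt_id x).const_mul (q ^ 2)
      have hNd : HasDerivAt N ((-1) * (1 - p * x) + (p - x) * -(p * 1) + q ^ 2 * 1) x :=
        h3.add h4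
      have h5 : HasDerivAt (fun t : ℝ => 1 - 2 * p * t + t ^ 2)
          (-(2 * p * 1) + 2 * x ^ 1) x := by
        exact (((hasDerivAt_id x).const_mul (2 * p)).const_sub 1).add
          ((hasDerivAt_pow 2 x).congr_deriv (by norm_num))
      have hDd : HasDerivAt D (q * (-(2 * p * 1) + 2 * x ^ 1)) x := h5.const_mul q
      have hf := hNd.div hDd hDx
      rw [show (fun t => N t / D t) = N / D from rfl, hf.deriv]
      apply div_neg_of_neg_of_pos
      · have key : ((-1) * (1 - p * x) + (p - x) * -(p * 1) + q ^ 2 * 1) * D x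
            - N x * (q * (-(2 * p * 1) + 2 * x ^ 1))
            = -((1 - p ^ 2 - q ^ 2) * q * (1 - x ^ 2)) := by
          simp only [hN, hD]; ring
        rw [key, neg_lt_zero]
        have h6 : (0:ℝ) < 1 - x ^ 2 := by nlinarith [hx.1, hx.2]
        have h7 : (0:ℝ) < 1 - p ^ 2 - q ^ 2 := by linarith
        positivity
      · positivity
  refine ⟨fun t ht => hne t ht, fun t => Real.pi / 2 - Real.arctan (N t / D t), ?_, ?_, ?_⟩
  · apply ContinuousOn.sub continuousOn_const
    exact Real.continuous_arctan.comp_continuousOn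
      ((by fun_prop : Continuous N).continuousOn.div
        (by fun_prop : Continuous D).continuousOn (fun t ht => (hDpos t ht).ne'))
  · intro x hx y hy hxy
    have := hanti hx hy hxy
    have := Real.arctan_strictMono this
    dsimp only
    linarith
  · intro t ht
    have h := upper_rep _ (hIm t ht)
    rw [hratio t ht] at h
    exact h
end

section
/- Let a₁, …, a_k be finitely many points of 𝔻, each lying in the open second quadrant (Re a_j < 0 and Im a_j > 0), and set B₁(t) = ∏_{j=1}^k (a_j - t)/(1 - conj(a_j)·t). Then B₁ has no zeros on [0,1], and there exists a continuous strictly increasing function θ : [0,1] → ℝ such that B₁(t) = |B₁(t)|·e^{iθ(t)} for all t ∈ [0,1]. -/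
open Complex Filter Metric

-- per-factor derivative of the argument
lemma factor_deriv (a : ℂ) (t : ℝ) (hre : a.re < 0) (him : 0 < a.im) (ht : 0 ≤ t) :
    HasDerivAt (fun s : ℝ => (Complex.log (a - s)).im - (Complex.log (1 - (starRingEnd ℂ) a * s)).im)
      (a.im / Complex.normSq (a - t) - a.im / Complex.normSq (1 - (starRingEnd ℂ) a * t)) t := by
  have hnum_im : (a - (t:ℂ)).im = a.im := by simp
  have hden_re : 0 < (1 - (starRingEnd ℂ) a * t).re := by
    have : ((starRingEnd ℂ) a * t).re = a.re * t := by simp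
    have h1 : a.re * t ≤ 0 := mul_nonpos_of_nonpos_of_nonneg hre.le ht
    simp [this]; nlinarith
  have hslit1 : (a - (t:ℂ)) ∈ Complex.slitPlane := Or.inr (by rw [hnum_im]; exact him.ne')
  have hslit2 : (1 - (starRingEnd ℂ) a * t) ∈ Complex.slitPlane := Or.inl hden_re
  have h1 : HasDerivAt (fun z : ℂ => Complex.log (a - z)) (-(a - (t:ℂ))⁻¹) (t:ℂ) := by
    have := (Complex.hasDerivAt_log hslit1).comp (t:ℂ)
      ((hasDerivAt_const (t:ℂ) a).sub (hasDerivAt_id (t:ℂ)))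
    simpa [Function.comp_def] using this
  have h2 : HasDerivAt (fun z : ℂ => Complex.log (1 - (starRingEnd ℂ) a * z))
      ((1 - (starRingEnd ℂ) a * t)⁻¹ * (-(starRingEnd ℂ) a)) (t:ℂ) := by
    have := (Complex.hasDerivAt_log hslit2).comp (t:ℂ)
      ((hasDerivAt_const (t:ℂ) 1).sub (((hasDerivAt_id (t:ℂ)).const_mul ((starRingEnd ℂ) a))))
    simpa [Function.comp_def] using this
  have h1r := h1.comp_ofReal
  have h2r := h2.comp_ofReal
  have h3 := h1r.sub h2r
  have h4 := Complex.imCLM.hasFDerivAt.comp_hasDerivAt t h3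
  have him_eq : (Complex.imCLM : ℂ → ℝ) ∘ (fun s : ℝ => Complex.log (a - s) - Complex.log (1 - (starRingEnd ℂ) a * s))
      = fun s : ℝ => (Complex.log (a - s)).im - (Complex.log (1 - (starRingEnd ℂ) a * s)).im := by
    funext s; simp
  have hden0 : (1 - (starRingEnd ℂ) a * (t:ℝ)) ≠ 0 := fun h => by simp [h] at hden_re
  have hnum0 : (a - (t:ℂ)) ≠ 0 := fun h => by
    have := congrArg Complex.im h; simp at this; exact him.ne' this
  have hnsd : Complex.normSq (1 - (starRingEnd ℂ) a * t) ≠ 0 := by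
    simpa using (Complex.normSq_pos.mpr hden0).ne'
  have hnsn : Complex.normSq (a - (t:ℂ)) ≠ 0 := (Complex.normSq_pos.mpr hnum0).ne'
  have hval : Complex.imCLM (-(a - (t:ℂ))⁻¹ - (1 - (starRingEnd ℂ) a * t)⁻¹ * (-(starRingEnd ℂ) a))
      = a.im / Complex.normSq (a - t) - a.im / Complex.normSq (1 - (starRingEnd ℂ) a * t) := by
    simp only [Complex.imCLM_apply, Complex.sub_im, Complex.neg_im, Complex.inv_im,
      Complex.mul_im, Complex.mul_re, Complex.inv_re, Complex.neg_re, Complex.one_im,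
      Complex.one_re, Complex.ofReal_re, Complex.ofReal_im, Complex.conj_re, Complex.conj_im]
    field_simp
    ring_nf
    simp
    ring
  rw [← him_eq]
  exact hval ▸ h4

-- polar form per factor
lemma factor_polar (z w : ℂ) (hz : z ≠ 0) (hw : w ≠ 0) :
    z / w = (‖z / w‖ : ℂ) *
      Complex.exp (Complex.I * (((Complex.log z).im - (Complex.log w).im : ℝ))) := by
  rw [Complex.log_im, Complex.log_im, norm_div]
  push_cast
  rw [mul_sub, Complex.exp_sub]
  have hz' := Complex.norm_mul_exp_arg_mul_I z
  have hw' := Complex.norm_mul_exp_arg_mul_I w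
  rw [div_mul_div_comm]
  rw [mul_comm Complex.I, mul_comm Complex.I, hz', hw']

-- normSq comparison
lemma normSq_lt (a : ℂ) (t : ℝ) (ha : ‖a‖ < 1) (ht0 : 0 < t) (ht1 : t < 1) :
    Complex.normSq (a - t) < Complex.normSq (1 - (starRingEnd ℂ) a * t) := by
  have h : Complex.normSq a < 1 := by
    have := Complex.sq_norm a
    nlinarith [norm_nonneg a]
  simp only [Complex.normSq_apply, Complex.sub_re, Complex.sub_im, Complex.ofReal_re,
    Complex.ofReal_im, Complex.mul_re, Complex.mul_im, Complex.one_re, Complex.one_im,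
    Complex.conj_re, Complex.conj_im] at *
  nlinarith [mul_pos (show (0:ℝ) < 1 - (a.re*a.re+a.im*a.im) by linarith)
    (show (0:ℝ) < 1 - t*t by nlinarith)]

/-- If `a₁, …, a_k ∈ 𝔻` all lie in the open second quadrant, then the finite Blaschke
product `B₁(t) = ∏_{j=1}^k (a_j - t)/(1 - conj a_j · t)` has no zeros on `[0,1]` and
its argument can be chosen as a continuous strictly increasing function
`θ : [0,1] → ℝ` with `B₁(t) = |B₁(t)| e^{iθ(t)}`. -/
theorem stmt11 (k : ℕ) (hk : 0 < k) (a : Fin k → ℂ) (ha : ∀ j, ‖a j‖ < 1)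
    (hre : ∀ j, (a j).re < 0) (him : ∀ j, 0 < (a j).im) :
    (∀ t : ℝ, t ∈ Set.Icc (0 : ℝ) 1 →
      (∏ j : Fin k, (a j - t) / (1 - (starRingEnd ℂ) (a j) * t)) ≠ 0) ∧
    ∃ θ : ℝ → ℝ, ContinuousOn θ (Set.Icc 0 1) ∧ StrictMonoOn θ (Set.Icc 0 1) ∧
      ∀ t : ℝ, t ∈ Set.Icc (0 : ℝ) 1 →
        (∏ j : Fin k, (a j - t) / (1 - (starRingEnd ℂ) (a j) * t)) =
          ((‖∏ j : Fin k, (a j - t) / (1 - (starRingEnd ℂ) (a j) * t)‖ : ℝ) : ℂ) *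
            Complex.exp (Complex.I * θ t) := by
  have hnum0 : ∀ (j : Fin k) (t : ℝ), (a j - (t:ℂ)) ≠ 0 := fun j t h => by
    have := congrArg Complex.im h
    simp at this
    exact (him j).ne' this
  have hden0 : ∀ (j : Fin k) (t : ℝ), 0 ≤ t → (1 - (starRingEnd ℂ) (a j) * t) ≠ 0 := by
    intro j t ht h
    have := congrArg Complex.re h
    simp at this
    nlinarith [mul_nonpos_of_nonpos_of_nonneg (hre j).le ht]
  have hB0 : ∀ t : ℝ, t ∈ Set.Icc (0:ℝ) 1 →
      (∏ j : Fin k, (a j - t) / (1 - (starRingEnd ℂ) (a j) * t)) ≠ 0 := by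
    intro t ht
    exact Finset.prod_ne_zero_iff.mpr fun j _ => div_ne_zero (hnum0 j t) (hden0 j t ht.1)
  refine ⟨hB0, ?_⟩
  set θ : ℝ → ℝ := fun t => ∑ j : Fin k,
    ((Complex.log (a j - t)).im - (Complex.log (1 - (starRingEnd ℂ) (a j) * t)).im) with hθ
  have hderiv : ∀ t : ℝ, 0 ≤ t → HasDerivAt θ
      (∑ j : Fin k, ((a j).im / Complex.normSq (a j - t)
        - (a j).im / Complex.normSq (1 - (starRingEnd ℂ) (a j) * t))) t :=
    fun t ht => HasDerivAt.fun_sum fun j _ => factor_deriv (a j) t (hre j) (him j) ht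
  have hcont : ContinuousOn θ (Set.Icc 0 1) :=
    fun t ht => ((hderiv t ht.1).continuousAt).continuousWithinAt
  have hmono : StrictMonoOn θ (Set.Icc 0 1) := by
    apply strictMonoOn_of_deriv_pos (convex_Icc 0 1) hcont
    intro x hx
    rw [interior_Icc] at hx
    rw [(hderiv x hx.1.le).deriv]
    have : Nonempty (Fin k) := ⟨⟨0, hk⟩⟩
    apply Finset.sum_pos _ Finset.univ_nonempty
    intro j _
    have hnsn : 0 < Complex.normSq (a j - x) := Complex.normSq_pos.mpr (hnum0 j x)
    have hlt := normSq_lt (a j) x (ha j) hx.1 hx.2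
    have := div_lt_div_of_pos_left (him j) hnsn hlt
    linarith
  refine ⟨θ, hcont, hmono, ?_⟩
  intro t ht
  have key : ∀ j : Fin k, (a j - (t:ℂ)) / (1 - (starRingEnd ℂ) (a j) * t) =
      (‖(a j - (t:ℂ)) / (1 - (starRingEnd ℂ) (a j) * t)‖ : ℂ) *
        Complex.exp (Complex.I * (((Complex.log (a j - t)).im
          - (Complex.log (1 - (starRingEnd ℂ) (a j) * t)).im : ℝ))) :=
    fun j => factor_polar _ _ (hnum0 j t) (hden0 j t ht.1)
  have habs : ((‖∏ j : Fin k, (a j - (t:ℂ)) / (1 - (starRingEnd ℂ) (a j) * t)‖) : ℂ)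
      = ∏ j : Fin k, ((‖(a j - (t:ℂ)) / (1 - (starRingEnd ℂ) (a j) * t)‖) : ℂ) := by
    rw [norm_prod, Complex.ofReal_prod]
  rw [habs, Finset.prod_congr rfl (fun j _ => key j), Finset.prod_mul_distrib, ← Complex.exp_sum]
  congr 1
  rw [hθ]
  push_cast
  rw [Finset.mul_sum]
end

section
/- Let a ∈ 𝔻 with a ∉ ℝ, let x_n = 1 - 1/n! for n ≥ 2, and let B(z) = ((a - z)/(1 - conj(a)·z)) · ∏_{n=2}^∞ (x_n - z)/(1 - x_n·z) for z ∈ 𝔻. Then for every complex number w ≠ 0, the set {t ∈ [0,1) : B(t) = w} is finite; that is, the restriction of B to [0,1) attains each nonzero value only finitely many times. -/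
open Complex Filter Metric

lemma tprod_ofReal_mem (g : ℕ → ℝ) :
    ∃ r : ℝ, (∏' n : ℕ, ((g n : ℝ) : ℂ)) = (r : ℂ) := by
  by_cases h : Multipliable fun n => ((g n : ℝ) : ℂ)
  · have hclosed : IsClosed (Set.range ((↑) : ℝ → ℂ)) :=
      Complex.isometry_ofReal.isClosedEmbedding.isClosed_range
    have hmem : ∀ s : Finset ℕ, (∏ i ∈ s, ((g i : ℝ) : ℂ)) ∈ Set.range ((↑) : ℝ → ℂ) :=
      fun s => ⟨∏ i ∈ s, g i, by push_cast; rfl⟩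
    have := hclosed.mem_of_tendsto h.hasProd (Filter.Eventually.of_forall hmem)
    obtain ⟨r, hr⟩ := this
    exact ⟨r, hr.symm⟩
  · exact ⟨1, by rw [tprod_eq_one_of_not_multipliable h]; simp⟩

/-- For `a ∈ 𝔻 \ ℝ`, the restriction of `B` to `[0,1)` attains each nonzero value
only finitely many times. -/
theorem stmt12 (a : ℂ) (ha : a ∈ ball (0 : ℂ) 1)
    (haR : a ∉ Set.range ((↑) : ℝ → ℂ))
    (w : ℂ) (hw : w ≠ 0) :
    {t : ℝ | t ∈ Set.Ico (0 : ℝ) 1 ∧ B a (t : ℂ) = w}.Finite := by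
  have haim : a.im ≠ 0 := by
    intro h
    exact haR ⟨a.re, by simp [Complex.ext_iff, h]⟩
  have hnorm : a.re ^ 2 + a.im ^ 2 < 1 := by
    have h1 : ‖a‖ < 1 := by simpa using mem_ball_zero_iff.mp ha
    have h2 : Complex.normSq a < 1 := by
      have := Complex.sq_norm a
      nlinarith [norm_nonneg a]
    simpa [Complex.normSq_apply, pow_two] using h2
  have hp : (Polynomial.C ((w * (starRingEnd ℂ) a).im) * Polynomial.X ^ 2
      - Polynomial.C ((w * (1 + ((starRingEnd ℂ) a) ^ 2)).im) * Polynomial.X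
      + Polynomial.C ((w * (starRingEnd ℂ) a).im)) ≠ 0 := by
    intro h0
    have hA0 : (w * (starRingEnd ℂ) a).im = 0 := by
      have := congrArg (Polynomial.eval 0) h0
      simp only [Polynomial.eval_add, Polynomial.eval_sub, Polynomial.eval_mul,
        Polynomial.eval_C, Polynomial.eval_pow, Polynomial.eval_X, Polynomial.eval_zero] at this
      linarith [this]
    have hB0 : (w * (1 + ((starRingEnd ℂ) a) ^ 2)).im = 0 := by
      have := congrArg (Polynomial.eval 1) h0
      simp only [Polynomial.eval_add, Polynomial.eval_sub, Polynomial.eval_mul,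
        Polynomial.eval_C, Polynomial.eval_pow, Polynomial.eval_X, Polynomial.eval_zero,
        Polynomial.eval_one] at this
      nlinarith [this, hA0]
    have e1 : -(w.re * a.im) + w.im * a.re = 0 := by
      simp only [Complex.mul_im, Complex.conj_re, Complex.conj_im] at hA0
      linarith
    have e2 : w.im * (1 + a.re ^ 2 - a.im ^ 2) - 2 * w.re * a.re * a.im = 0 := by
      simp only [Complex.mul_im, Complex.add_re, Complex.add_im, Complex.one_re,
        Complex.one_im, pow_two, Complex.mul_re, Complex.conj_re, Complex.conj_im] at hB0
      ring_nf at hB0 ⊢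
      linarith
    have e3 : w.im * (1 - a.re ^ 2 - a.im ^ 2) = 0 := by
      linear_combination e2 - 2 * a.re * e1
    have hwim : w.im = 0 := by
      have hne : 1 - a.re ^ 2 - a.im ^ 2 ≠ 0 := by nlinarith
      exact (mul_eq_zero.mp e3).resolve_right hne
    have hwre : w.re = 0 := by
      have h4 : w.re * a.im = 0 := by linear_combination a.re * hwim - e1
      rcases mul_eq_zero.mp h4 with h | h
      · exact h
      · exact absurd h haim
    exact hw (Complex.ext hwre hwim)
  apply Set.Finite.subset (Polynomial.finite_setOf_isRoot hp)
  rintro t ⟨⟨ht0, ht1⟩, hBt⟩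
  obtain ⟨r, hr⟩ := tprod_ofReal_mem
    (fun n => ((1 - 1 / (Nat.factorial (n + 2) : ℝ)) - t) /
      (1 - (1 - 1 / (Nat.factorial (n + 2) : ℝ)) * t))
  have hprod : (∏' n : ℕ, (((1 - 1 / (Nat.factorial (n + 2) : ℝ)) : ℂ) - (t : ℂ)) /
      (1 - ((1 - 1 / (Nat.factorial (n + 2) : ℝ)) : ℂ) * (t : ℂ))) = (r : ℂ) := by
    rw [← hr]
    exact tprod_congr fun n => by push_cast; ring
  rw [B, hprod] at hBt
  have hd : (1 - (starRingEnd ℂ) a * (t : ℂ)) ≠ 0 := by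
    intro h
    rw [h, div_zero, zero_mul] at hBt
    exact hw hBt.symm
  have hBt' : (a - (t : ℂ)) * (r : ℂ) = w * (1 - (starRingEnd ℂ) a * (t : ℂ)) := by
    rw [div_mul_eq_mul_div, div_eq_iff hd] at hBt
    linear_combination hBt
  have key : w * (1 - (starRingEnd ℂ) a * (t : ℂ)) * ((starRingEnd ℂ) a - (t : ℂ))
      = (r : ℂ) * ((a - (t : ℂ)) * ((starRingEnd ℂ) a - (t : ℂ))) := by
    linear_combination ((starRingEnd ℂ) a - (t : ℂ)) * hBt'.symm
  have hconj : (a - (t : ℂ)) * ((starRingEnd ℂ) a - (t : ℂ))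
      = (Complex.normSq (a - (t : ℂ)) : ℂ) := by
    rw [← Complex.mul_conj]
    congr 1
    rw [map_sub, Complex.conj_ofReal]
  have him : (w * (1 - (starRingEnd ℂ) a * (t : ℂ)) * ((starRingEnd ℂ) a - (t : ℂ))).im = 0 := by
    rw [key, hconj, ← Complex.ofReal_mul]
    exact Complex.ofReal_im _
  have hmulim : ∀ (s : ℝ) (z : ℂ), ((s : ℂ) * z).im = s * z.im := fun s z => by
    simp [Complex.mul_im]
  have hexpand : w * (1 - (starRingEnd ℂ) a * (t : ℂ)) * ((starRingEnd ℂ) a - (t : ℂ))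
      = ((t ^ 2 : ℝ) : ℂ) * (w * (starRingEnd ℂ) a)
        - ((t : ℝ) : ℂ) * (w * (1 + ((starRingEnd ℂ) a) ^ 2))
        + w * (starRingEnd ℂ) a := by push_cast; ring
  rw [hexpand, Complex.add_im, Complex.sub_im, hmulim, hmulim] at him
  simp only [Set.mem_setOf_eq, Polynomial.IsRoot, Polynomial.eval_add, Polynomial.eval_sub,
    Polynomial.eval_mul, Polynomial.eval_C, Polynomial.eval_pow, Polynomial.eval_X]
  linarith [him]
end

section
/- There exists a holomorphic function φ : 𝔻 → ℂ with φ(𝔻) = 𝔻 whose zero set Z(φ) = {z ∈ 𝔻 : φ(z) = 0} is nonempty and finite, and such that for every λ ∈ 𝔻 the fiber {z ∈ 𝔻 : φ(z) = φ(λ)} is finite if and only if λ ∈ Z(φ) (equivalently, if and only if φ(λ) = 0). -/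
open Complex Filter Metric

namespace Stmt17Aux

open Set Real

noncomputable def phi : ℂ → ℂ := fun z => z * Complex.exp ((z+1)/(z-1))

lemma m_inv (u : ℂ) (hu : u - 1 ≠ 0) :
    (((u+1)/(u-1)) + 1)/(((u+1)/(u-1)) - 1) = u := by
  have h2 : (u+1)/(u-1) - 1 = 2/(u-1) := by field_simp; ring
  have h3 : (u+1)/(u-1) + 1 = 2*u/(u-1) := by field_simp; ring
  rw [h2, h3]
  rw [div_div_div_cancel_right₀]
  · field_simp
  · exact hu

lemma sq_norm_c (u : ℂ) : ‖u‖^2 = u.re^2 + u.im^2 := by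
  rw [Complex.sq_norm, Complex.normSq_apply]; ring

lemma norm_m_lt (u : ℂ) (h : u.re < 0) : ‖(u+1)/(u-1)‖ < 1 := by
  have h1 : ‖u+1‖^2 < ‖u-1‖^2 := by
    rw [sq_norm_c, sq_norm_c]
    simp only [Complex.add_re, Complex.sub_re, Complex.add_im, Complex.sub_im,
      Complex.one_re, Complex.one_im]
    nlinarith
  have h2 : ‖u+1‖ < ‖u-1‖ := lt_of_pow_lt_pow_left₀ 2 (norm_nonneg _) h1
  have h3 : (0:ℝ) < ‖u-1‖ := lt_of_le_of_lt (norm_nonneg _) h2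
  rw [norm_div, div_lt_one h3]
  exact h2

lemma re_m_neg (z : ℂ) (h : ‖z‖ < 1) : ((z+1)/(z-1)).re < 0 := by
  have hz : 0 < Complex.normSq (z - 1) := by
    rw [Complex.normSq_pos, sub_ne_zero]
    rintro rfl; simp at h
  have hn : Complex.normSq z < 1 := by
    have : ‖z‖^2 < 1 := by nlinarith [norm_nonneg z]
    rwa [Complex.sq_norm] at this
  rw [Complex.div_re]
  have e1 : (z+1).re * (z-1).re + (z+1).im * (z-1).im = Complex.normSq z - 1 := by
    simp [Complex.normSq_apply]; ring
  rw [← add_div, div_neg_iff]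
  right
  exact ⟨by linarith, hz⟩

lemma fixedpt (c : ℂ) (r : ℝ) (hr0 : 0 < r) (hr1 : r ≤ 1) (hc : 4/r + 2 ≤ ‖c‖) :
    ∃ u ∈ closedBall c r, (u - 1)/(u + 1) = Complex.exp (u - c) := by
  have hr4 : (4:ℝ) ≤ 4/r := by
    rw [le_div_iff₀ hr0]; nlinarith
  set s : Set ℂ := closedBall c r with hs
  set f : ℂ → ℂ := fun u => c + Complex.log ((u-1)/(u+1)) with hf
  have hbig : ∀ u ∈ s, 4/r ≤ ‖u - 1‖ ∧ 4/r ≤ ‖u + 1‖ := by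
    intro u hu
    rw [hs, Metric.mem_closedBall, dist_eq_norm] at hu
    constructor
    · have h1 : ‖c‖ ≤ ‖u - 1‖ + (r + 1) := by
        calc ‖c‖ = ‖(u-1) - ((u - c) - 1)‖ := by congr 1; ring
          _ ≤ ‖u-1‖ + ‖(u-c) - 1‖ := norm_sub_le _ _
          _ ≤ ‖u-1‖ + (‖u-c‖ + ‖(1:ℂ)‖) := by linarith [norm_sub_le (u-c) 1]
          _ ≤ ‖u-1‖ + (r + 1) := by
              have e1 : ‖(1:ℂ)‖ = 1 := by simp
              linarith
      linarith
    · have h1 : ‖c‖ ≤ ‖u + 1‖ + (r + 1) := by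
        calc ‖c‖ = ‖(u+1) - ((u - c) + 1)‖ := by congr 1; ring
          _ ≤ ‖u+1‖ + ‖(u-c) + 1‖ := norm_sub_le _ _
          _ ≤ ‖u+1‖ + (‖u-c‖ + ‖(1:ℂ)‖) := by linarith [norm_add_le (u-c) 1]
          _ ≤ ‖u+1‖ + (r + 1) := by
              have e1 : ‖(1:ℂ)‖ = 1 := by simp
              linarith
      linarith
  have hne : ∀ u ∈ s, u - 1 ≠ 0 ∧ u + 1 ≠ 0 := by
    intro u hu
    obtain ⟨h1, h2⟩ := hbig u hu
    constructor
    · intro h; rw [h, norm_zero] at h1; linarith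
    · intro h; rw [h, norm_zero] at h2; linarith
  have hx : ∀ u ∈ s, (u-1)/(u+1) = 1 + (-2/(u+1)) := by
    intro u hu
    obtain ⟨_, h2⟩ := hne u hu
    field_simp
    ring
  have hxs : ∀ u ∈ s, ‖(-2 : ℂ)/(u+1)‖ ≤ r/2 := by
    intro u hu
    obtain ⟨_, h2⟩ := hbig u hu
    rw [norm_div]
    have h4 : (0:ℝ) < 4/r := by linarith
    rw [div_le_iff₀ (by linarith)]
    have : ‖(-2:ℂ)‖ = 2 := by simp
    rw [this]
    calc (2:ℝ) = (r/2) * (4/r) := by field_simp; ring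
      _ ≤ r/2 * ‖u+1‖ := by
          apply mul_le_mul_of_nonneg_left h2 (by linarith)
  have hlog : ∀ u ∈ s, ‖Complex.log ((u-1)/(u+1))‖ ≤ 3*r/4 := by
    intro u hu
    rw [hx u hu]
    calc ‖Complex.log (1 + -2/(u+1))‖ ≤ 3/2 * ‖(-2:ℂ)/(u+1)‖ :=
          Complex.norm_log_one_add_half_le_self (by linarith [hxs u hu])
      _ ≤ 3/2 * (r/2) := by linarith [hxs u hu, norm_nonneg ((-2:ℂ)/(u+1))]
      _ = 3*r/4 := by ring
  have hmaps : MapsTo f s s := by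
    intro u hu
    rw [hs, Metric.mem_closedBall, dist_eq_norm]
    have : f u - c = Complex.log ((u-1)/(u+1)) := by rw [hf]; ring
    rw [this]
    linarith [hlog u hu]
  have hslit : ∀ u ∈ s, (u-1)/(u+1) ∈ Complex.slitPlane := by
    intro u hu
    rw [Complex.mem_slitPlane_iff]
    left
    have h1 : ‖(u-1)/(u+1) - 1‖ ≤ 1/2 := by
      rw [hx u hu]; simpa using le_trans (hxs u hu) (by linarith)
    have h2 := Complex.abs_re_le_norm ((u-1)/(u+1) - 1)
    have : |((u-1)/(u+1)).re - 1| ≤ 1/2 := by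
      simpa using le_trans h2 h1
    have := abs_le.mp this
    linarith [this.1]
  have hderiv : ∀ u ∈ s, HasDerivWithinAt f (((u-1)/(u+1))⁻¹ * (2/(u+1)^2)) s u := by
    intro u hu
    obtain ⟨hn1, hn2⟩ := hne u hu
    have h1 : HasDerivAt (fun u : ℂ => (u-1)/(u+1)) (2/(u+1)^2) u := by
      have ha : HasDerivAt (fun u : ℂ => u - 1) 1 u := (hasDerivAt_id u).sub_const 1
      have hb : HasDerivAt (fun u : ℂ => u + 1) 1 u := (hasDerivAt_id u).add_const 1
      have := ha.div hb hn2
      rw [show (2:ℂ)/(u+1)^2 = (1 * (u + 1) - (u - 1) * 1) / (u + 1) ^ 2 by ring]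
      exact this
    have h2 : HasDerivAt Complex.log ((u-1)/(u+1))⁻¹ ((u-1)/(u+1)) :=
      Complex.hasDerivAt_log (hslit u hu)
    have h3 := (h2.comp u h1)
    exact (h3.const_add c).hasDerivWithinAt
  have hbound : ∀ u ∈ s, ‖((u-1)/(u+1))⁻¹ * (2/(u+1)^2)‖ ≤ 1/2 := by
    intro u hu
    obtain ⟨h1, h2⟩ := hbig u hu
    obtain ⟨hn1, hn2⟩ := hne u hu
    have e : ((u-1)/(u+1))⁻¹ * (2/(u+1)^2) = 2 / ((u-1)*(u+1)) := by
      field_simp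
    rw [e, norm_div, norm_mul]
    have hp1 : (0:ℝ) < ‖u-1‖ := by linarith
    have hp2 : (0:ℝ) < ‖u+1‖ := by linarith
    rw [div_le_iff₀ (by positivity)]
    have : ‖(2:ℂ)‖ = 2 := by simp
    rw [this]
    nlinarith
  have hlip : LipschitzOnWith (1/2 : NNReal) f s := by
    rw [lipschitzOnWith_iff_dist_le_mul]
    intro x hx' y hy'
    rw [dist_eq_norm, dist_eq_norm]
    have := Convex.norm_image_sub_le_of_norm_hasDerivWithin_le
      (f' := fun u => ((u-1)/(u+1))⁻¹ * (2/(u+1)^2)) hderiv hbound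
      (convex_closedBall c r) hy' hx'
    calc ‖f x - f y‖ ≤ 1/2 * ‖x - y‖ := this
      _ = ((1/2 : NNReal) : ℝ) * ‖x - y‖ := by push_cast; norm_num
  have hcontr : ContractingWith (1/2 : NNReal) (hmaps.restrict f s s) :=
    ⟨by rw [← NNReal.coe_lt_coe]; norm_num, hlip.mapsToRestrict hmaps⟩
  obtain ⟨y, hys, hfy, -, -⟩ := hcontr.exists_fixedPoint'
    (Metric.isClosed_closedBall.isComplete) hmaps (Metric.mem_closedBall_self hr0.le)
    (edist_ne_top _ _)
  refine ⟨y, hys, ?_⟩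
  obtain ⟨hn1, hn2⟩ := hne y hys
  have hfy' : c + Complex.log ((y-1)/(y+1)) = y := hfy
  have h2 : y - c = Complex.log ((y-1)/(y+1)) := by linear_combination -hfy'
  rw [h2, Complex.exp_log (div_ne_zero hn1 hn2)]

noncomputable def rr (w : ℂ) : ℝ := min 1 (-(Complex.log w).re / 2)

lemma rr_pos (w : ℂ) (hw0 : w ≠ 0) (hw1 : ‖w‖ < 1) : 0 < rr w ∧ rr w ≤ 1 := by
  have h1 : (Complex.log w).re < 0 := by
    rw [Complex.log_re]
    apply Real.log_neg
    · exact norm_pos_iff.mpr hw0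
    · exact hw1
  exact ⟨lt_min one_pos (by linarith), min_le_left _ _⟩

lemma sol (w : ℂ) (hw0 : w ≠ 0) (hw1 : ‖w‖ < 1) (k : ℕ)
    (hk : 4 / rr w + 2 + ‖Complex.log w‖ ≤ 2 * Real.pi * k) :
    ∃ u : ℂ, u.re < 0 ∧ ((u+1)/(u-1)) * Complex.exp u = w ∧
      |u.im - ((Complex.log w).im + 2 * Real.pi * k)| ≤ 1 := by
  obtain ⟨hr0, hr1⟩ := rr_pos w hw0 hw1
  set L := Complex.log w with hL
  set r := rr w with hr
  set c : ℂ := L + (2 * Real.pi * k : ℝ) * Complex.I with hcdef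
  have hLre : L.re < 0 := by
    rw [hL, Complex.log_re]
    apply Real.log_neg
    · exact norm_pos_iff.mpr hw0
    · exact hw1
  have hrL : r ≤ -L.re / 2 := min_le_right _ _
  have hnormc : 4/r + 2 ≤ ‖c‖ := by
    have h1 : ‖((2 * Real.pi * k : ℝ) : ℂ) * Complex.I‖ = 2 * Real.pi * k := by
      rw [norm_mul, Complex.norm_I, mul_one, Complex.norm_real, Real.norm_eq_abs,
        _root_.abs_of_nonneg (by positivity)]
    have h2 : ‖c‖ ≥ 2 * Real.pi * k - ‖L‖ := by
      calc ‖c‖ = ‖((2 * Real.pi * k : ℝ) : ℂ) * Complex.I - (-L)‖ := by congr 1; ring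
        _ ≥ ‖((2 * Real.pi * k : ℝ) : ℂ) * Complex.I‖ - ‖-L‖ := norm_sub_norm_le _ _
        _ = 2 * Real.pi * k - ‖L‖ := by rw [h1, norm_neg]
    linarith
  obtain ⟨u, hus, hueq⟩ := fixedpt c r hr0 hr1 hnormc
  rw [Metric.mem_closedBall, dist_eq_norm] at hus
  have hcre : c.re = L.re := by simp [hcdef]
  have hcim : c.im = L.im + 2 * Real.pi * k := by simp [hcdef]
  have hure : u.re < 0 := by
    have h1 : |(u - c).re| ≤ ‖u - c‖ := Complex.abs_re_le_norm _
    have h2 : (u - c).re = u.re - c.re := by simp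
    rw [h2, hcre] at h1
    have := (abs_le.mp (le_trans h1 hus)).2
    linarith
  have hnu : 5 ≤ ‖u‖ := by
    have h4 : (4:ℝ) ≤ 4/r := by rw [le_div_iff₀ hr0]; nlinarith
    have h1 : ‖c‖ ≤ ‖u‖ + r := by
      calc ‖c‖ = ‖u - (u - c)‖ := by congr 1; ring
        _ ≤ ‖u‖ + ‖u - c‖ := norm_sub_le _ _
        _ ≤ ‖u‖ + r := by linarith
    linarith
  have hn1 : u - 1 ≠ 0 := by
    intro h
    have : u = 1 := by linear_combination h
    rw [this] at hnu; simp at hnu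
  have hn2 : u + 1 ≠ 0 := by
    intro h
    have : u = -1 := by linear_combination h
    rw [this] at hnu; simp at hnu
  have hexpc : Complex.exp c = w := by
    rw [hcdef, Complex.exp_add, Complex.exp_log hw0]
    have : ((2 * Real.pi * k : ℝ) : ℂ) * Complex.I = (k : ℂ) * (2 * Real.pi * Complex.I) := by
      push_cast; ring
    rw [this, Complex.exp_nat_mul_two_pi_mul_I, mul_one]
  have heq2 : Complex.exp (u - c) = Complex.exp u / w := by
    rw [Complex.exp_sub, hexpc]
  rw [heq2] at hueq
  refine ⟨u, hure, ?_, ?_⟩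
  · field_simp at hueq ⊢
    linear_combination -hueq
  · have h1 : |(u - c).im| ≤ ‖u - c‖ := Complex.abs_im_le_norm _
    have h2 : (u - c).im = u.im - (L.im + 2 * Real.pi * k) := by simp [hcdef]
    rw [h2] at h1
    linarith [le_trans h1 hus]

lemma sol2 (w : ℂ) (hw0 : w ≠ 0) (hw1 : ‖w‖ < 1) (k : ℕ)
    (hk : 4 / rr w + 2 + ‖Complex.log w‖ ≤ 2 * Real.pi * k) :
    ∃ z : ℂ, ‖z‖ < 1 ∧ phi z = w ∧
      |((z+1)/(z-1)).im - ((Complex.log w).im + 2 * Real.pi * k)| ≤ 1 := by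
  obtain ⟨u, hure, heq, him⟩ := sol w hw0 hw1 k hk
  have hn1 : u - 1 ≠ 0 := by
    intro h
    have h2 : u = 1 := by linear_combination h
    rw [h2] at hure; simp at hure
    exact absurd hure (by norm_num)
  refine ⟨(u+1)/(u-1), norm_m_lt u hure, ?_, ?_⟩
  · show (u+1)/(u-1) * Complex.exp ((((u+1)/(u-1)) + 1)/(((u+1)/(u-1)) - 1)) = w
    rw [m_inv u hn1]; exact heq
  · rw [m_inv u hn1]; exact him

lemma norm_phi_lt (z : ℂ) (hz : ‖z‖ < 1) : ‖phi z‖ < 1 := by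
  have h1 : ((z+1)/(z-1)).re < 0 := re_m_neg z hz
  have h2 : ‖Complex.exp ((z+1)/(z-1))‖ < 1 := by
    rw [Complex.norm_exp]
    exact Real.exp_lt_one_iff.mpr h1
  calc ‖phi z‖ = ‖z‖ * ‖Complex.exp ((z+1)/(z-1))‖ := norm_mul _ _
    _ < 1 := by nlinarith [norm_nonneg z, norm_nonneg (Complex.exp ((z+1)/(z-1)))]

lemma kcond (w : ℂ) (hw0 : w ≠ 0) (hw1 : ‖w‖ < 1) (n : ℕ) :
    4 / rr w + 2 + ‖Complex.log w‖ ≤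
      2 * Real.pi * ((⌈4 / rr w + 2 + ‖Complex.log w‖⌉₊ + n : ℕ)) := by
  set a := 4 / rr w + 2 + ‖Complex.log w‖ with ha
  have h0 : 0 ≤ a := by
    obtain ⟨hr0, hr1⟩ := rr_pos w hw0 hw1
    have : (0:ℝ) < 4 / rr w := by positivity
    have := norm_nonneg (Complex.log w)
    rw [ha]; linarith
  have h1 : a ≤ (⌈a⌉₊ : ℝ) := Nat.le_ceil a
  have h2 : ((⌈a⌉₊ : ℝ)) ≤ ((⌈a⌉₊ + n : ℕ) : ℝ) := by
    push_cast; linarith [Nat.cast_nonneg (α := ℝ) n]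
  have h3 : (1:ℝ) ≤ 2 * Real.pi := by nlinarith [Real.pi_gt_three]
  have h4 : (0:ℝ) ≤ ((⌈a⌉₊ + n : ℕ) : ℝ) := Nat.cast_nonneg _
  nlinarith

lemma fiber_infinite (w : ℂ) (hw0 : w ≠ 0) (hw1 : ‖w‖ < 1) :
    {z : ℂ | z ∈ ball (0 : ℂ) 1 ∧ phi z = w}.Infinite := by
  set k0 := ⌈4 / rr w + 2 + ‖Complex.log w‖⌉₊ with hk0
  have H : ∀ n : ℕ, ∃ z : ℂ, (z ∈ ball (0:ℂ) 1 ∧ phi z = w) ∧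
      |((z+1)/(z-1)).im - ((Complex.log w).im + 2 * Real.pi * (k0 + n : ℕ))| ≤ 1 := by
    intro n
    obtain ⟨z, hz1, hz2, hz3⟩ := sol2 w hw0 hw1 (k0 + n) (kcond w hw0 hw1 n)
    exact ⟨z, ⟨mem_ball_zero_iff.mpr hz1, hz2⟩, hz3⟩
  choose g hg1 hg2 using H
  apply Set.infinite_of_injective_forall_mem (f := g) ?_ hg1
  intro n m hnm
  by_contra hne
  have e1 := hg2 n
  have e2 := hg2 m
  rw [hnm] at e1
  set x := ((g m + 1)/(g m - 1)).im
  have h3 : |2 * Real.pi * (k0 + n : ℕ) - 2 * Real.pi * (k0 + m : ℕ)| ≤ 2 := by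
    have := abs_sub_abs_le_abs_sub (x - ((Complex.log w).im + 2 * Real.pi * (k0 + n : ℕ)))
      (x - ((Complex.log w).im + 2 * Real.pi * (k0 + m : ℕ)))
    have t1 := abs_sub (x - ((Complex.log w).im + 2 * Real.pi * (k0 + n : ℕ)))
      (x - ((Complex.log w).im + 2 * Real.pi * (k0 + m : ℕ)))
    calc |2 * Real.pi * (k0 + n : ℕ) - 2 * Real.pi * (k0 + m : ℕ)|
        = |(x - ((Complex.log w).im + 2 * Real.pi * (k0 + m : ℕ))) -
           (x - ((Complex.log w).im + 2 * Real.pi * (k0 + n : ℕ)))| := by congr 1; ring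
      _ ≤ |x - ((Complex.log w).im + 2 * Real.pi * (k0 + m : ℕ))| +
           |x - ((Complex.log w).im + 2 * Real.pi * (k0 + n : ℕ))| := abs_sub _ _
      _ ≤ 2 := by linarith
  have h4 : 2 * Real.pi * (k0 + n : ℕ) - 2 * Real.pi * (k0 + m : ℕ)
      = 2 * Real.pi * ((n:ℝ) - m) := by push_cast; ring
  rw [h4, abs_mul, _root_.abs_of_nonneg (by positivity : (0:ℝ) ≤ 2 * Real.pi)] at h3
  have h5 : (1:ℝ) ≤ |(n:ℝ) - m| := by
    have hne' : ((n:ℤ)) ≠ (m:ℤ) := by exact_mod_cast hne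
    have hi := Int.one_le_abs (sub_ne_zero.mpr hne')
    have h6 : (1:ℝ) ≤ |((n:ℤ):ℝ) - ((m:ℤ):ℝ)| := by
      rw [← Int.cast_sub, ← Int.cast_abs]
      exact_mod_cast hi
    push_cast at h6
    exact h6
  nlinarith [Real.pi_gt_three]

end Stmt17Aux

/-- There exists a holomorphic function `φ` mapping the unit disk onto the unit disk
whose zero set `Z(φ)` is nonempty and finite, and such that for `λ ∈ 𝔻` the fiber
`{z ∈ 𝔻 : φ(z) = φ(λ)}` is finite exactly when `φ(λ) = 0`, i.e. when `λ ∈ Z(φ)`. -/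
theorem stmt17 :
    ∃ φ : ℂ → ℂ, DifferentiableOn ℂ φ (ball (0 : ℂ) 1) ∧
      φ '' (ball (0 : ℂ) 1) = ball (0 : ℂ) 1 ∧
      {z : ℂ | z ∈ ball (0 : ℂ) 1 ∧ φ z = 0}.Nonempty ∧
      {z : ℂ | z ∈ ball (0 : ℂ) 1 ∧ φ z = 0}.Finite ∧
      ∀ l ∈ ball (0 : ℂ) 1,
        ({z : ℂ | z ∈ ball (0 : ℂ) 1 ∧ φ z = φ l}.Finite ↔ φ l = 0) := by
  refine ⟨Stmt17Aux.phi, ?_, ?_, ?_, ?_, ?_⟩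
  · intro z hz
    rw [mem_ball_zero_iff] at hz
    have hz1 : z - 1 ≠ 0 := by
      intro h
      have : z = 1 := by linear_combination h
      rw [this] at hz; simp at hz
    have hd : DifferentiableAt ℂ (fun z : ℂ => (z+1)/(z-1)) z :=
      DifferentiableAt.div (by fun_prop) (by fun_prop) hz1
    exact (differentiableAt_fun_id.mul
      (Complex.differentiable_exp.differentiableAt.comp z hd)).differentiableWithinAt
  · apply Set.Subset.antisymm
    · rintro _ ⟨z, hz, rfl⟩
      rw [mem_ball_zero_iff] at hz ⊢
      exact Stmt17Aux.norm_phi_lt z hz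
    · intro w hw
      rw [mem_ball_zero_iff] at hw
      by_cases hw0 : w = 0
      · refine ⟨0, ?_, ?_⟩
        · exact mem_ball_self one_pos
        · simp [Stmt17Aux.phi, hw0]
      · obtain ⟨z, hz1, hz2, -⟩ := Stmt17Aux.sol2 w hw0 hw
          ⌈4 / Stmt17Aux.rr w + 2 + ‖Complex.log w‖⌉₊
          (by simpa using Stmt17Aux.kcond w hw0 hw 0)
        exact ⟨z, mem_ball_zero_iff.mpr hz1, hz2⟩
  · exact ⟨0, mem_ball_self one_pos, by simp [Stmt17Aux.phi]⟩
  · have : {z : ℂ | z ∈ ball (0 : ℂ) 1 ∧ Stmt17Aux.phi z = 0} = {0} := by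
      ext z
      simp only [Set.mem_setOf_eq, Set.mem_singleton_iff, mem_ball_zero_iff]
      constructor
      · rintro ⟨-, h⟩
        have := Complex.exp_ne_zero ((z+1)/(z-1))
        simpa [Stmt17Aux.phi, this] using h
      · rintro rfl
        exact ⟨by simp, by simp [Stmt17Aux.phi]⟩
    rw [this]
    exact Set.finite_singleton 0
  · intro l hl
    constructor
    · intro hfin
      by_contra hφ
      have hw1 : ‖Stmt17Aux.phi l‖ < 1 :=
        Stmt17Aux.norm_phi_lt l (mem_ball_zero_iff.mp hl)
      exact (Stmt17Aux.fiber_infinite (Stmt17Aux.phi l) hφ hw1) hfin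
    · intro hφ
      rw [hφ]
      have : {z : ℂ | z ∈ ball (0 : ℂ) 1 ∧ Stmt17Aux.phi z = 0} = {0} := by
        ext z
        simp only [Set.mem_setOf_eq, Set.mem_singleton_iff, mem_ball_zero_iff]
        constructor
        · rintro ⟨-, h⟩
          have := Complex.exp_ne_zero ((z+1)/(z-1))
          simpa [Stmt17Aux.phi, this] using h
        · rintro rfl
          exact ⟨by simp, by simp [Stmt17Aux.phi]⟩
      rw [this]
      exact Set.finite_singleton 0
end
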